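/- arXiv:1811.03933 — 2 statements merged into one kernel-verified Lean document; each statement's English description precedes it below -/
import Mathlib

section
/- In the variational CEO cost, the parameter s1 can be restricted to (0,1]: if s1 > 1, then for every choice of encoders P, F_s(P) = H(X|U1,U2,Y0) + s1 I(Y1;U1|U2,Y0) + s2 I(Y2;U2|Y0) ≥ H(X|U2,Y0) + s2 I(Y2;U2|Y0), and the latter value is attained by taking U1 constant; hence min_P F_s(P) = H(X|U2,Y0) + s2 I(Y2;U2|Y0) whenever s1 > 1. -/
open scoped BigOperators

noncomputable section

namespace CEO

variable {X Y0 Y1 Y2 U1 U2 : Type*}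
  [Fintype X] [Fintype Y0] [Fintype Y1] [Fintype Y2] [Fintype U1] [Fintype U2]

/-- Joint pmf of `(X, Y0, Y1, Y2, U1, U2)` induced by the source pmf `p` on
`(X, Y0, Y1, Y2)` and the stochastic encoders `P1 : Y1 → U1`, `P2 : Y2 → U2`
(this encodes the Markov chain `U1 – Y1 – (X,Y0) – Y2 – U2`). -/
def joint (p : X → Y0 → Y1 → Y2 → ℝ) (P1 : Y1 → U1 → ℝ) (P2 : Y2 → U2 → ℝ)
    (x : X) (y0 : Y0) (y1 : Y1) (y2 : Y2) (u1 : U1) (u2 : U2) : ℝ :=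
  p x y0 y1 y2 * P1 y1 u1 * P2 y2 u2

variable (p : X → Y0 → Y1 → Y2 → ℝ) (P1 : Y1 → U1 → ℝ) (P2 : Y2 → U2 → ℝ)

def mXU12Y0 (x : X) (u1 : U1) (u2 : U2) (y0 : Y0) : ℝ :=
  ∑ y1, ∑ y2, joint p P1 P2 x y0 y1 y2 u1 u2

def mU12Y0 (u1 : U1) (u2 : U2) (y0 : Y0) : ℝ := ∑ x, mXU12Y0 p P1 P2 x u1 u2 y0

def mY1U1U2Y0 (y1 : Y1) (u1 : U1) (u2 : U2) (y0 : Y0) : ℝ :=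
  ∑ x, ∑ y2, joint p P1 P2 x y0 y1 y2 u1 u2

def mY1U2Y0 (y1 : Y1) (u2 : U2) (y0 : Y0) : ℝ :=
  ∑ x, ∑ y2, ∑ u1, joint p P1 P2 x y0 y1 y2 u1 u2

def mY2U2Y0 (y2 : Y2) (u2 : U2) (y0 : Y0) : ℝ :=
  ∑ x, ∑ y1, ∑ u1, joint p P1 P2 x y0 y1 y2 u1 u2

def mY2Y0 (y2 : Y2) (y0 : Y0) : ℝ := ∑ x, ∑ y1, p x y0 y1 y2

def mY0 (y0 : Y0) : ℝ := ∑ x, ∑ y1, ∑ y2, p x y0 y1 y2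

def mXY0 (x : X) (y0 : Y0) : ℝ := ∑ y1, ∑ y2, p x y0 y1 y2

def mXU1Y0 (x : X) (u1 : U1) (y0 : Y0) : ℝ :=
  ∑ y1, ∑ y2, ∑ u2, joint p P1 P2 x y0 y1 y2 u1 u2

def mU1Y0 (u1 : U1) (y0 : Y0) : ℝ := ∑ x, mXU1Y0 p P1 P2 x u1 y0

def mXU2Y0 (x : X) (u2 : U2) (y0 : Y0) : ℝ :=
  ∑ y1, ∑ y2, ∑ u1, joint p P1 P2 x y0 y1 y2 u1 u2

def mU2Y0 (u2 : U2) (y0 : Y0) : ℝ := ∑ x, mXU2Y0 p P1 P2 x u2 y0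

def mU1 (u1 : U1) : ℝ := ∑ y0, mU1Y0 p P1 P2 u1 y0

def mU2 (u2 : U2) : ℝ := ∑ y0, mU2Y0 p P1 P2 u2 y0

def mY1 (y1 : Y1) : ℝ := ∑ x, ∑ y0, ∑ y2, p x y0 y1 y2

def mY2 (y2 : Y2) : ℝ := ∑ x, ∑ y0, ∑ y1, p x y0 y1 y2

def mY1U1 (y1 : Y1) (u1 : U1) : ℝ := mY1 p y1 * P1 y1 u1

def mY2U2 (y2 : Y2) (u2 : U2) : ℝ := mY2 p y2 * P2 y2 u2

/-- `H(X | U1, U2, Y0)`. -/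
def HXgU12Y0 : ℝ :=
  -∑ x, ∑ u1, ∑ u2, ∑ y0, mXU12Y0 p P1 P2 x u1 u2 y0 *
    Real.log (mXU12Y0 p P1 P2 x u1 u2 y0 / mU12Y0 p P1 P2 u1 u2 y0)

/-- `I(Y1; U1 | U2, Y0)`. -/
def I1 : ℝ :=
  ∑ y1, ∑ u1, ∑ u2, ∑ y0, mY1U1U2Y0 p P1 P2 y1 u1 u2 y0 *
    Real.log (mY1U1U2Y0 p P1 P2 y1 u1 u2 y0 * mU2Y0 p P1 P2 u2 y0 /
      (mY1U2Y0 p P1 P2 y1 u2 y0 * mU12Y0 p P1 P2 u1 u2 y0))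

/-- `I(Y2; U2 | Y0)`. -/
def I2 : ℝ :=
  ∑ y2, ∑ u2, ∑ y0, mY2U2Y0 p P1 P2 y2 u2 y0 *
    Real.log (mY2U2Y0 p P1 P2 y2 u2 y0 * mY0 p y0 /
      (mY2Y0 p y2 y0 * mU2Y0 p P1 P2 u2 y0))

/-- The CEO Lagrangian `F_s(P) = H(X|U1,U2,Y0) + s1 I(Y1;U1|U2,Y0) + s2 I(Y2;U2|Y0)`. -/
def Fs (s1 s2 : ℝ) : ℝ :=
  HXgU12Y0 p P1 P2 + s1 * I1 p P1 P2 + s2 * I2 p P1 P2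

end CEO

namespace CEO

variable {X Y0 Y1 Y2 U1 U2 : Type*}
  [Fintype X] [Fintype Y0] [Fintype Y1] [Fintype Y2] [Fintype U1] [Fintype U2]
variable (p : X → Y0 → Y1 → Y2 → ℝ) (P2 : Y2 → U2 → ℝ)

/-- Marginal `P_{X,U2,Y0}` (depending only on the source and the second encoder). -/
def mXU2Y0' (x : X) (u2 : U2) (y0 : Y0) : ℝ := ∑ y1, ∑ y2, p x y0 y1 y2 * P2 y2 u2

def mU2Y0' (u2 : U2) (y0 : Y0) : ℝ := ∑ x, mXU2Y0' p P2 x u2 y0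

def mY2U2Y0' (y2 : Y2) (u2 : U2) (y0 : Y0) : ℝ := (∑ x, ∑ y1, p x y0 y1 y2) * P2 y2 u2

/-- `H(X | U2, Y0)`, depending only on `p` and `P2`. -/
def HXgU2Y0' : ℝ :=
  -∑ x, ∑ u2, ∑ y0, mXU2Y0' p P2 x u2 y0 *
    Real.log (mXU2Y0' p P2 x u2 y0 / mU2Y0' p P2 u2 y0)

/-- `I(Y2; U2 | Y0)`, depending only on `p` and `P2`. -/
def I2' : ℝ :=
  ∑ y2, ∑ u2, ∑ y0, mY2U2Y0' p P2 y2 u2 y0 *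
    Real.log (mY2U2Y0' p P2 y2 u2 y0 * mY0 p y0 /
      (mY2Y0 p y2 y0 * mU2Y0' p P2 u2 y0))


set_option linter.unusedSectionVars false in
private lemma sum_comm3 {α β γ : Type*} [Fintype α] [Fintype β] [Fintype γ]
    (f : α → β → γ → ℝ) :
    ∑ a, ∑ b, ∑ c, f a b c = ∑ c, ∑ a, ∑ b, f a b c := by
  calc ∑ a, ∑ b, ∑ c, f a b c = ∑ a, ∑ c, ∑ b, f a b c :=
        Finset.sum_congr rfl fun a _ => Finset.sum_comm
    _ = _ := Finset.sum_comm

private lemma sum_comm4 {α β γ δ : Type*} [Fintype α] [Fintype β] [Fintype γ] [Fintype δ]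
    (f : α → β → γ → δ → ℝ) :
    ∑ a, ∑ b, ∑ c, ∑ d, f a b c d = ∑ d, ∑ a, ∑ b, ∑ c, f a b c d := by
  calc ∑ a, ∑ b, ∑ c, ∑ d, f a b c d = ∑ a, ∑ d, ∑ b, ∑ c, f a b c d :=
        Finset.sum_congr rfl fun a _ => sum_comm3 _
    _ = _ := Finset.sum_comm

private lemma sum_comm5 {α β γ δ ε : Type*} [Fintype α] [Fintype β] [Fintype γ] [Fintype δ]
    [Fintype ε] (f : α → β → γ → δ → ε → ℝ) :
    ∑ a, ∑ b, ∑ c, ∑ d, ∑ e, f a b c d e = ∑ e, ∑ a, ∑ b, ∑ c, ∑ d, f a b c d e := by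
  calc ∑ a, ∑ b, ∑ c, ∑ d, ∑ e, f a b c d e = ∑ a, ∑ e, ∑ b, ∑ c, ∑ d, f a b c d e :=
        Finset.sum_congr rfl fun a _ => sum_comm4 _
    _ = _ := Finset.sum_comm

private lemma gibbs_point {a b : ℝ} (ha : 0 ≤ a) (hb : 0 ≤ b) (h : a ≠ 0 → b ≠ 0) :
    a - b ≤ a * Real.log (a / b) := by
  rcases eq_or_lt_of_le ha with h0 | h0
  · simp [← h0]; linarith
  · have hb' : 0 < b := (h h0.ne').lt_of_le' hb
    have h1 := Real.log_le_sub_one_of_pos (div_pos hb' h0)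
    have hlog : Real.log (a / b) = -Real.log (b / a) := by
      rw [← Real.log_inv, inv_div]
    rw [hlog]
    have h2 : a * Real.log (b / a) ≤ a * (b / a - 1) :=
      mul_le_mul_of_nonneg_left h1 ha
    have hba : a * (b / a) = b := by field_simp
    nlinarith

section Aux
set_option linter.unusedSectionVars false

variable (P1 : Y1 → U1 → ℝ)

/-- marginal over `y2` of the joint: `P_{X,Y1,U1,U2,Y0}`. -/
def qJ (x : X) (y1 : Y1) (u1 : U1) (u2 : U2) (y0 : Y0) : ℝ :=
  ∑ y2, joint p P1 P2 x y0 y1 y2 u1 u2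

/-- `P_{X,Y1,U2,Y0}`. -/
def rJ (x : X) (y1 : Y1) (u2 : U2) (y0 : Y0) : ℝ :=
  ∑ y2, p x y0 y1 y2 * P2 y2 u2

lemma q_eq_r_mul (x : X) (y1 : Y1) (u1 : U1) (u2 : U2) (y0 : Y0) :
    qJ p P2 P1 x y1 u1 u2 y0 = rJ p P2 x y1 u2 y0 * P1 y1 u1 := by
  simp only [qJ, rJ, joint, Finset.sum_mul]
  exact Finset.sum_congr rfl fun y2 _ => by ring

lemma mY1U1U2Y0_eq (y1 : Y1) (u1 : U1) (u2 : U2) (y0 : Y0) :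
    mY1U1U2Y0 p P1 P2 y1 u1 u2 y0 = ∑ x, qJ p P2 P1 x y1 u1 u2 y0 := rfl

lemma mXU12Y0_eq (x : X) (u1 : U1) (u2 : U2) (y0 : Y0) :
    mXU12Y0 p P1 P2 x u1 u2 y0 = ∑ y1, qJ p P2 P1 x y1 u1 u2 y0 := rfl

lemma mXU2Y0'_eq (x : X) (u2 : U2) (y0 : Y0) :
    mXU2Y0' p P2 x u2 y0 = ∑ y1, rJ p P2 x y1 u2 y0 := rfl

lemma mU2Y0'_eq (u2 : U2) (y0 : Y0) :
    mU2Y0' p P2 u2 y0 = ∑ x, mXU2Y0' p P2 x u2 y0 := rfl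

lemma mU12Y0_eq (u1 : U1) (u2 : U2) (y0 : Y0) :
    mU12Y0 p P1 P2 u1 u2 y0 = ∑ x, mXU12Y0 p P1 P2 x u1 u2 y0 := rfl

variable {P1}

lemma r_nonneg (hp : ∀ x y0 y1 y2, 0 ≤ p x y0 y1 y2) (hP2 : ∀ y2 u2, 0 ≤ P2 y2 u2)
    (x : X) (y1 : Y1) (u2 : U2) (y0 : Y0) : 0 ≤ rJ p P2 x y1 u2 y0 :=
  Finset.sum_nonneg fun _ _ => mul_nonneg (hp _ _ _ _) (hP2 _ _)

lemma q_nonneg (hp : ∀ x y0 y1 y2, 0 ≤ p x y0 y1 y2) (hP1 : ∀ y1 u1, 0 ≤ P1 y1 u1)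
    (hP2 : ∀ y2 u2, 0 ≤ P2 y2 u2)
    (x : X) (y1 : Y1) (u1 : U1) (u2 : U2) (y0 : Y0) : 0 ≤ qJ p P2 P1 x y1 u1 u2 y0 :=
  Finset.sum_nonneg fun _ _ => mul_nonneg (mul_nonneg (hp _ _ _ _) (hP1 _ _)) (hP2 _ _)

lemma sum_u1_q (hP1sum : ∀ y1, ∑ u1, P1 y1 u1 = 1) (x : X) (y1 : Y1) (u2 : U2) (y0 : Y0) :
    ∑ u1, qJ p P2 P1 x y1 u1 u2 y0 = rJ p P2 x y1 u2 y0 := by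
  simp_rw [q_eq_r_mul, ← Finset.mul_sum, hP1sum, mul_one]

lemma mY1U2Y0_eq (hP1sum : ∀ y1, ∑ u1, P1 y1 u1 = 1) (y1 : Y1) (u2 : U2) (y0 : Y0) :
    mY1U2Y0 p P1 P2 y1 u2 y0 = ∑ x, rJ p P2 x y1 u2 y0 := by
  unfold mY1U2Y0
  refine Finset.sum_congr rfl fun x _ => ?_
  rw [Finset.sum_comm]
  exact sum_u1_q p P2 hP1sum x y1 u2 y0

lemma mY1U1U2Y0_eq' (hP1sum : ∀ y1, ∑ u1, P1 y1 u1 = 1) (y1 : Y1) (u1 : U1) (u2 : U2)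
    (y0 : Y0) :
    mY1U1U2Y0 p P1 P2 y1 u1 u2 y0 = mY1U2Y0 p P1 P2 y1 u2 y0 * P1 y1 u1 := by
  rw [mY1U1U2Y0_eq, mY1U2Y0_eq p P2 hP1sum, Finset.sum_mul]
  exact Finset.sum_congr rfl fun x _ => q_eq_r_mul p P2 P1 x y1 u1 u2 y0

lemma mXU2Y0_eq (hP1sum : ∀ y1, ∑ u1, P1 y1 u1 = 1) (x : X) (u2 : U2) (y0 : Y0) :
    mXU2Y0 p P1 P2 x u2 y0 = mXU2Y0' p P2 x u2 y0 := by
  unfold mXU2Y0 mXU2Y0'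
  refine Finset.sum_congr rfl fun y1 _ => ?_
  rw [Finset.sum_comm]
  exact sum_u1_q p P2 hP1sum x y1 u2 y0

lemma mU2Y0_eq (hP1sum : ∀ y1, ∑ u1, P1 y1 u1 = 1) (u2 : U2) (y0 : Y0) :
    mU2Y0 p P1 P2 u2 y0 = mU2Y0' p P2 u2 y0 :=
  Finset.sum_congr rfl fun x _ => mXU2Y0_eq p P2 hP1sum x u2 y0

lemma mY2U2Y0_eq (hP1sum : ∀ y1, ∑ u1, P1 y1 u1 = 1) (y2 : Y2) (u2 : U2) (y0 : Y0) :
    mY2U2Y0 p P1 P2 y2 u2 y0 = mY2U2Y0' p P2 y2 u2 y0 := by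
  unfold mY2U2Y0 mY2U2Y0'
  rw [Finset.sum_mul]
  refine Finset.sum_congr rfl fun x _ => ?_
  rw [Finset.sum_mul]
  refine Finset.sum_congr rfl fun y1 _ => ?_
  simp only [joint]
  calc ∑ u1, p x y0 y1 y2 * P1 y1 u1 * P2 y2 u2
      = ∑ u1, (p x y0 y1 y2 * P2 y2 u2) * P1 y1 u1 :=
        Finset.sum_congr rfl fun _ _ => by ring
    _ = (p x y0 y1 y2 * P2 y2 u2) * ∑ u1, P1 y1 u1 := (Finset.mul_sum ..).symm
    _ = _ := by rw [hP1sum, mul_one]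

lemma I2_eq (hP1sum : ∀ y1, ∑ u1, P1 y1 u1 = 1) : I2 p P1 P2 = I2' p P2 := by
  unfold I2 I2'
  simp_rw [mY2U2Y0_eq p P2 hP1sum, mU2Y0_eq p P2 hP1sum]

lemma sum_u1_mXU12Y0 (hP1sum : ∀ y1, ∑ u1, P1 y1 u1 = 1) (x : X) (u2 : U2) (y0 : Y0) :
    ∑ u1, mXU12Y0 p P1 P2 x u1 u2 y0 = mXU2Y0' p P2 x u2 y0 := by
  simp_rw [mXU12Y0_eq]
  rw [Finset.sum_comm]
  exact Finset.sum_congr rfl fun y1 _ => sum_u1_q p P2 hP1sum x y1 u2 y0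

/-- total mass of `mXU2Y0'`. -/
lemma TM1 (hpsum : ∑ x, ∑ y0, ∑ y1, ∑ y2, p x y0 y1 y2 = 1)
    (hP2sum : ∀ y2, ∑ u2, P2 y2 u2 = 1) :
    ∑ x, ∑ u2, ∑ y0, mXU2Y0' p P2 x u2 y0 = 1 := by
  unfold mXU2Y0'
  rw [← hpsum]
  refine Finset.sum_congr rfl fun x _ => ?_
  rw [← sum_comm4 fun y0 y1 y2 u2 => p x y0 y1 y2 * P2 y2 u2]
  refine Finset.sum_congr rfl fun y0 _ => Finset.sum_congr rfl fun y1 _ => ?_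
  simp_rw [← Finset.mul_sum, hP2sum, mul_one]

/-- total mass of `mU2Y0`. -/
lemma TM2 (hpsum : ∑ x, ∑ y0, ∑ y1, ∑ y2, p x y0 y1 y2 = 1)
    (hP1sum : ∀ y1, ∑ u1, P1 y1 u1 = 1) (hP2sum : ∀ y2, ∑ u2, P2 y2 u2 = 1) :
    ∑ u2, ∑ y0, mU2Y0 p P1 P2 u2 y0 = 1 := by
  simp_rw [mU2Y0_eq p P2 hP1sum, mU2Y0'_eq]
  rw [sum_comm3 fun u2 y0 x => mXU2Y0' p P2 x u2 y0]
  exact TM1 p P2 hpsum hP2sum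

end Aux

section Main
set_option linter.unusedSectionVars false
set_option maxHeartbeats 1000000

variable {P1 : Y1 → U1 → ℝ}

lemma I1_nonneg (hp : ∀ x y0 y1 y2, 0 ≤ p x y0 y1 y2)
    (hpsum : ∑ x, ∑ y0, ∑ y1, ∑ y2, p x y0 y1 y2 = 1)
    (hP1 : ∀ y1 u1, 0 ≤ P1 y1 u1) (hP1sum : ∀ y1, ∑ u1, P1 y1 u1 = 1)
    (hP2 : ∀ y2 u2, 0 ≤ P2 y2 u2) (hP2sum : ∀ y2, ∑ u2, P2 y2 u2 = 1) :
    0 ≤ I1 p P1 P2 := by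
  set a := mY1U1U2Y0 p P1 P2 with ha_def
  have ha : ∀ y1 u1 u2 y0, 0 ≤ a y1 u1 u2 y0 := fun y1 u1 u2 y0 =>
    Finset.sum_nonneg fun _ _ => q_nonneg p P2 hp hP1 hP2 _ _ _ _ _
  have hm1 : ∀ y1 u2 y0, mY1U2Y0 p P1 P2 y1 u2 y0 = ∑ u1, a y1 u1 u2 y0 := by
    intro y1 u2 y0
    rw [show (∑ u1, a y1 u1 u2 y0) = ∑ u1, ∑ x, ∑ y2, joint p P1 P2 x y0 y1 y2 u1 u2 from rfl,
      ← sum_comm3 fun x y2 u1 => joint p P1 P2 x y0 y1 y2 u1 u2]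
    rfl
  have hm2 : ∀ u1 u2 y0, mU12Y0 p P1 P2 u1 u2 y0 = ∑ y1, a y1 u1 u2 y0 := by
    intro u1 u2 y0
    rw [mU12Y0_eq]
    exact Finset.sum_comm
  have hm3 : ∀ u2 y0, mU2Y0 p P1 P2 u2 y0 = ∑ y1, ∑ u1, a y1 u1 u2 y0 := by
    intro u2 y0
    rw [show mU2Y0 p P1 P2 u2 y0 =
      ∑ x, ∑ y1, ∑ y2, ∑ u1, joint p P1 P2 x y0 y1 y2 u1 u2 from rfl, Finset.sum_comm]
    refine Finset.sum_congr rfl fun y1 _ => ?_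
    rw [sum_comm3 fun x y2 u1 => joint p P1 P2 x y0 y1 y2 u1 u2]
    rfl
  have hma : ∀ {y1 u1 u2 y0}, 0 < a y1 u1 u2 y0 → 0 < mY1U2Y0 p P1 P2 y1 u2 y0 := by
    intro y1 u1 u2 y0 h
    rw [hm1]
    exact h.trans_le (Finset.single_le_sum (fun i _ => ha y1 i u2 y0) (Finset.mem_univ u1))
  have hmb : ∀ {y1 u1 u2 y0}, 0 < a y1 u1 u2 y0 → 0 < mU12Y0 p P1 P2 u1 u2 y0 := by
    intro y1 u1 u2 y0 h
    rw [hm2]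
    exact h.trans_le (Finset.single_le_sum (fun i _ => ha i u1 u2 y0) (Finset.mem_univ y1))
  have hmc : ∀ {y1 u1 u2 y0}, 0 < a y1 u1 u2 y0 → 0 < mU2Y0 p P1 P2 u2 y0 := by
    intro y1 u1 u2 y0 h
    rw [hm3]
    refine lt_of_lt_of_le ?_ (Finset.single_le_sum
      (f := fun y1' => ∑ u1', a y1' u1' u2 y0)
      (fun i _ => Finset.sum_nonneg fun j _ => ha i j u2 y0) (Finset.mem_univ y1))
    exact h.trans_le (Finset.single_le_sum (fun i _ => ha y1 i u2 y0) (Finset.mem_univ u1))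
  set b : Y1 → U1 → U2 → Y0 → ℝ := fun y1 u1 u2 y0 =>
    mY1U2Y0 p P1 P2 y1 u2 y0 * mU12Y0 p P1 P2 u1 u2 y0 / mU2Y0 p P1 P2 u2 y0 with hb_def
  have hbnn : ∀ y1 u1 u2 y0, 0 ≤ b y1 u1 u2 y0 := by
    intro y1 u1 u2 y0
    refine div_nonneg (mul_nonneg ?_ ?_) ?_
    · rw [hm1]; exact Finset.sum_nonneg fun i _ => ha _ _ _ _
    · rw [hm2]; exact Finset.sum_nonneg fun i _ => ha _ _ _ _
    · rw [hm3]; exact Finset.sum_nonneg fun i _ => Finset.sum_nonneg fun j _ => ha _ _ _ _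
  -- pointwise bound
  have key : ∀ y1 u1 u2 y0, a y1 u1 u2 y0 - b y1 u1 u2 y0 ≤
      a y1 u1 u2 y0 * Real.log (a y1 u1 u2 y0 * mU2Y0 p P1 P2 u2 y0 /
        (mY1U2Y0 p P1 P2 y1 u2 y0 * mU12Y0 p P1 P2 u1 u2 y0)) := by
    intro y1 u1 u2 y0
    rcases eq_or_lt_of_le (ha y1 u1 u2 y0) with h0 | h0
    · rw [← h0, zero_mul, zero_sub]
      linarith [hbnn y1 u1 u2 y0]
    · have h1 := hma h0
      have h2 := hmb h0
      have h3 := hmc h0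
      have hb' : 0 < b y1 u1 u2 y0 := div_pos (mul_pos h1 h2) h3
      have harg : a y1 u1 u2 y0 * mU2Y0 p P1 P2 u2 y0 /
          (mY1U2Y0 p P1 P2 y1 u2 y0 * mU12Y0 p P1 P2 u1 u2 y0)
          = a y1 u1 u2 y0 / b y1 u1 u2 y0 := by
        rw [hb_def]
        field_simp
      rw [harg]
      exact gibbs_point h0.le hb'.le fun _ => hb'.ne'
  have hsum : (∑ y1, ∑ u1, ∑ u2, ∑ y0, a y1 u1 u2 y0)
      - (∑ y1, ∑ u1, ∑ u2, ∑ y0, b y1 u1 u2 y0) ≤ I1 p P1 P2 := by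
    rw [← Finset.sum_sub_distrib]
    simp_rw [← Finset.sum_sub_distrib]
    exact Finset.sum_le_sum fun y1 _ => Finset.sum_le_sum fun u1 _ =>
      Finset.sum_le_sum fun u2 _ => Finset.sum_le_sum fun y0 _ => key y1 u1 u2 y0
  have reorder : ∀ f : Y1 → U1 → U2 → Y0 → ℝ,
      (∑ y1, ∑ u1, ∑ u2, ∑ y0, f y1 u1 u2 y0) = ∑ u2, ∑ y0, ∑ y1, ∑ u1, f y1 u1 u2 y0 := by
    intro f
    rw [sum_comm4 f]
    rw [show (∑ y0, ∑ y1, ∑ u1, ∑ u2, f y1 u1 u2 y0)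
        = ∑ y0, ∑ u2, ∑ y1, ∑ u1, f y1 u1 u2 y0 from
      Finset.sum_congr rfl fun y0 _ => sum_comm3 fun y1 u1 u2 => f y1 u1 u2 y0]
    exact Finset.sum_comm
  have hTa : (∑ y1, ∑ u1, ∑ u2, ∑ y0, a y1 u1 u2 y0) = 1 := by
    rw [reorder]
    rw [show (∑ u2, ∑ y0, ∑ y1, ∑ u1, a y1 u1 u2 y0) = ∑ u2, ∑ y0, mU2Y0 p P1 P2 u2 y0 from
      Finset.sum_congr rfl fun u2 _ => Finset.sum_congr rfl fun y0 _ => (hm3 u2 y0).symm]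
    exact TM2 p P2 hpsum hP1sum hP2sum
  have hTb : (∑ y1, ∑ u1, ∑ u2, ∑ y0, b y1 u1 u2 y0) ≤ 1 := by
    rw [reorder]
    have inner : ∀ u2 y0, (∑ y1, ∑ u1, b y1 u1 u2 y0) ≤ mU2Y0 p P1 P2 u2 y0 := by
      intro u2 y0
      have e0 : (∑ y1, ∑ u1, b y1 u1 u2 y0)
          = (∑ y1, mY1U2Y0 p P1 P2 y1 u2 y0) * (∑ u1, mU12Y0 p P1 P2 u1 u2 y0)
            / mU2Y0 p P1 P2 u2 y0 := by
        rw [hb_def]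
        simp only [Finset.sum_div, Finset.sum_mul, Finset.mul_sum]
        exact Finset.sum_comm
      have e1 : (∑ y1, mY1U2Y0 p P1 P2 y1 u2 y0) = mU2Y0 p P1 P2 u2 y0 := by
        rw [hm3]
        exact Finset.sum_congr rfl fun y1 _ => hm1 y1 u2 y0
      have e2 : (∑ u1, mU12Y0 p P1 P2 u1 u2 y0) = mU2Y0 p P1 P2 u2 y0 := by
        rw [hm3]
        rw [show (∑ u1, mU12Y0 p P1 P2 u1 u2 y0) = ∑ u1, ∑ y1, a y1 u1 u2 y0 from
          Finset.sum_congr rfl fun u1 _ => hm2 u1 u2 y0]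
        exact Finset.sum_comm
      rw [e0, e1, e2]
      rcases eq_or_lt_of_le (show (0:ℝ) ≤ mU2Y0 p P1 P2 u2 y0 by
        rw [hm3]; exact Finset.sum_nonneg fun i _ => Finset.sum_nonneg fun j _ => ha _ _ _ _)
        with h | h
      · rw [← h]; simp
      · rw [mul_div_assoc, div_self h.ne', mul_one]
    calc (∑ u2, ∑ y0, ∑ y1, ∑ u1, b y1 u1 u2 y0)
        ≤ ∑ u2, ∑ y0, mU2Y0 p P1 P2 u2 y0 :=
          Finset.sum_le_sum fun u2 _ => Finset.sum_le_sum fun y0 _ => inner u2 y0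
      _ = 1 := TM2 p P2 hpsum hP1sum hP2sum
  have : I1 p P1 P2 = ∑ y1, ∑ u1, ∑ u2, ∑ y0, a y1 u1 u2 y0 *
      Real.log (a y1 u1 u2 y0 * mU2Y0 p P1 P2 u2 y0 /
        (mY1U2Y0 p P1 P2 y1 u2 y0 * mU12Y0 p P1 P2 u1 u2 y0)) := rfl
  linarith [hsum, hTb, hTa.ge, hTa.le]

end Main

section Main2
set_option linter.unusedSectionVars false
set_option maxHeartbeats 1600000

variable {P1 : Y1 → U1 → ℝ}

lemma HXg_le (hp : ∀ x y0 y1 y2, 0 ≤ p x y0 y1 y2)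
    (hpsum : ∑ x, ∑ y0, ∑ y1, ∑ y2, p x y0 y1 y2 = 1)
    (hP1 : ∀ y1 u1, 0 ≤ P1 y1 u1) (hP1sum : ∀ y1, ∑ u1, P1 y1 u1 = 1)
    (hP2 : ∀ y2 u2, 0 ≤ P2 y2 u2) (hP2sum : ∀ y2, ∑ u2, P2 y2 u2 = 1) :
    HXgU2Y0' p P2 ≤ HXgU12Y0 p P1 P2 + I1 p P1 P2 := by
  set q : X → Y1 → U1 → U2 → Y0 → ℝ := qJ p P2 P1 with hq_def
  set r : X → Y1 → U2 → Y0 → ℝ := rJ p P2 with hr_def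
  have hqnn : ∀ x y1 u1 u2 y0, 0 ≤ q x y1 u1 u2 y0 :=
    fun x y1 u1 u2 y0 => q_nonneg p P2 hp hP1 hP2 x y1 u1 u2 y0
  have hrnn : ∀ x y1 u2 y0, 0 ≤ r x y1 u2 y0 :=
    fun x y1 u2 y0 => r_nonneg p P2 hp hP2 x y1 u2 y0
  set b : X → U1 → U2 → Y0 → Y1 → ℝ := fun x u1 u2 y0 y1 =>
    r x y1 u2 y0 * mXU12Y0 p P1 P2 x u1 u2 y0 / mXU2Y0' p P2 x u2 y0 with hb_def
  have hbnn : ∀ x u1 u2 y0 y1, 0 ≤ b x u1 u2 y0 y1 := fun x u1 u2 y0 y1 => by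
    refine div_nonneg (mul_nonneg (hrnn _ _ _ _) ?_) ?_
    · rw [mXU12Y0_eq]; exact Finset.sum_nonneg fun i _ => hqnn _ _ _ _ _
    · rw [mXU2Y0'_eq]; exact Finset.sum_nonneg fun i _ => hrnn _ _ _ _
  -- the three expansions
  have E1 : HXgU12Y0 p P1 P2 = -∑ x, ∑ u1, ∑ u2, ∑ y0, ∑ y1,
      q x y1 u1 u2 y0 * Real.log (mXU12Y0 p P1 P2 x u1 u2 y0 / mU12Y0 p P1 P2 u1 u2 y0) := by
    unfold HXgU12Y0
    congr 1
    refine Finset.sum_congr rfl fun x _ => Finset.sum_congr rfl fun u1 _ =>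
      Finset.sum_congr rfl fun u2 _ => Finset.sum_congr rfl fun y0 _ => ?_
    rw [mXU12Y0_eq p P2 P1 x u1 u2 y0, Finset.sum_mul]
  have E2 : I1 p P1 P2 = ∑ x, ∑ u1, ∑ u2, ∑ y0, ∑ y1,
      q x y1 u1 u2 y0 * Real.log (mY1U1U2Y0 p P1 P2 y1 u1 u2 y0 * mU2Y0 p P1 P2 u2 y0 /
        (mY1U2Y0 p P1 P2 y1 u2 y0 * mU12Y0 p P1 P2 u1 u2 y0)) := by
    unfold I1
    rw [show (∑ y1, ∑ u1, ∑ u2, ∑ y0, mY1U1U2Y0 p P1 P2 y1 u1 u2 y0 *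
        Real.log (mY1U1U2Y0 p P1 P2 y1 u1 u2 y0 * mU2Y0 p P1 P2 u2 y0 /
          (mY1U2Y0 p P1 P2 y1 u2 y0 * mU12Y0 p P1 P2 u1 u2 y0)))
        = ∑ y1, ∑ u1, ∑ u2, ∑ y0, ∑ x, q x y1 u1 u2 y0 *
        Real.log (mY1U1U2Y0 p P1 P2 y1 u1 u2 y0 * mU2Y0 p P1 P2 u2 y0 /
          (mY1U2Y0 p P1 P2 y1 u2 y0 * mU12Y0 p P1 P2 u1 u2 y0)) from
      Finset.sum_congr rfl fun y1 _ => Finset.sum_congr rfl fun u1 _ =>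
        Finset.sum_congr rfl fun u2 _ => Finset.sum_congr rfl fun y0 _ => by
          rw [mY1U1U2Y0_eq p P2 P1 y1 u1 u2 y0, Finset.sum_mul]]
    rw [sum_comm5]
    exact Finset.sum_congr rfl fun x _ => (sum_comm4 fun u1 u2 y0 y1 =>
      q x y1 u1 u2 y0 * Real.log (mY1U1U2Y0 p P1 P2 y1 u1 u2 y0 * mU2Y0 p P1 P2 u2 y0 /
        (mY1U2Y0 p P1 P2 y1 u2 y0 * mU12Y0 p P1 P2 u1 u2 y0))).symm
  have E3 : HXgU2Y0' p P2 = -∑ x, ∑ u1, ∑ u2, ∑ y0, ∑ y1,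
      q x y1 u1 u2 y0 * Real.log (mXU2Y0' p P2 x u2 y0 / mU2Y0' p P2 u2 y0) := by
    unfold HXgU2Y0'
    congr 1
    refine Finset.sum_congr rfl fun x _ => ?_
    rw [show (∑ u2, ∑ y0, mXU2Y0' p P2 x u2 y0 *
        Real.log (mXU2Y0' p P2 x u2 y0 / mU2Y0' p P2 u2 y0))
        = ∑ u2, ∑ y0, ∑ y1, ∑ u1, q x y1 u1 u2 y0 *
          Real.log (mXU2Y0' p P2 x u2 y0 / mU2Y0' p P2 u2 y0) from
      Finset.sum_congr rfl fun u2 _ => Finset.sum_congr rfl fun y0 _ => by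
        rw [show mXU2Y0' p P2 x u2 y0 = ∑ y1, ∑ u1, q x y1 u1 u2 y0 from by
          rw [mXU2Y0'_eq]
          exact Finset.sum_congr rfl fun y1 _ => (sum_u1_q p P2 hP1sum x y1 u2 y0).symm]
        rw [Finset.sum_mul]
        exact Finset.sum_congr rfl fun y1 _ => Finset.sum_mul ..]
    exact sum_comm4 fun u2 y0 y1 u1 => q x y1 u1 u2 y0 *
      Real.log (mXU2Y0' p P2 x u2 y0 / mU2Y0' p P2 u2 y0)
  -- pointwise inequality
  have key : ∀ x u1 u2 y0 y1,
      q x y1 u1 u2 y0 - b x u1 u2 y0 y1 ≤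
      q x y1 u1 u2 y0 * Real.log (mY1U1U2Y0 p P1 P2 y1 u1 u2 y0 * mU2Y0 p P1 P2 u2 y0 /
          (mY1U2Y0 p P1 P2 y1 u2 y0 * mU12Y0 p P1 P2 u1 u2 y0))
        - q x y1 u1 u2 y0 * Real.log (mXU12Y0 p P1 P2 x u1 u2 y0 / mU12Y0 p P1 P2 u1 u2 y0)
        + q x y1 u1 u2 y0 * Real.log (mXU2Y0' p P2 x u2 y0 / mU2Y0' p P2 u2 y0) := by
    intro x u1 u2 y0 y1
    rcases eq_or_lt_of_le (hqnn x y1 u1 u2 y0) with h0 | h0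
    · rw [← h0]
      simp only [zero_mul, zero_sub, sub_zero, add_zero]
      linarith [hbnn x u1 u2 y0 y1]
    · have hqr : q x y1 u1 u2 y0 = r x y1 u2 y0 * P1 y1 u1 := q_eq_r_mul p P2 P1 x y1 u1 u2 y0
      have hrp : 0 < r x y1 u2 y0 := by
        rcases eq_or_lt_of_le (hrnn x y1 u2 y0) with h | h
        · exfalso; rw [hqr, ← h, zero_mul] at h0; exact lt_irrefl _ h0
        · exact h
      have hP1p : 0 < P1 y1 u1 := by
        rcases eq_or_lt_of_le (hP1 y1 u1) with h | h
        · exfalso; rw [hqr, ← h, mul_zero] at h0; exact lt_irrefl _ h0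
        · exact h
      have h_mXU12 : 0 < mXU12Y0 p P1 P2 x u1 u2 y0 := by
        rw [mXU12Y0_eq]
        exact h0.trans_le (Finset.single_le_sum (fun i _ => hqnn x i u1 u2 y0)
          (Finset.mem_univ y1))
      have h_mXU2 : 0 < mXU2Y0' p P2 x u2 y0 := by
        rw [mXU2Y0'_eq]
        exact hrp.trans_le (Finset.single_le_sum (fun i _ => hrnn x i u2 y0)
          (Finset.mem_univ y1))
      have h_mU12 : 0 < mU12Y0 p P1 P2 u1 u2 y0 := by
        rw [mU12Y0_eq]
        refine h_mXU12.trans_le (Finset.single_le_sum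
          (f := fun x' => mXU12Y0 p P1 P2 x' u1 u2 y0) (fun i _ => ?_) (Finset.mem_univ x))
        show 0 ≤ mXU12Y0 p P1 P2 i u1 u2 y0
        rw [mXU12Y0_eq]
        exact Finset.sum_nonneg fun j _ => hqnn i j u1 u2 y0
      have h_mU2' : 0 < mU2Y0' p P2 u2 y0 := by
        rw [mU2Y0'_eq]
        refine h_mXU2.trans_le (Finset.single_le_sum
          (f := fun x' => mXU2Y0' p P2 x' u2 y0) (fun i _ => ?_) (Finset.mem_univ x))
        show 0 ≤ mXU2Y0' p P2 i u2 y0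
        rw [mXU2Y0'_eq]
        exact Finset.sum_nonneg fun j _ => hrnn i j u2 y0
      have h_mY1U2 : 0 < mY1U2Y0 p P1 P2 y1 u2 y0 := by
        rw [mY1U2Y0_eq p P2 hP1sum]
        exact hrp.trans_le (Finset.single_le_sum (fun i _ => hrnn i y1 u2 y0)
          (Finset.mem_univ x))
      have h_mY1U1U2 : mY1U1U2Y0 p P1 P2 y1 u1 u2 y0
          = mY1U2Y0 p P1 P2 y1 u2 y0 * P1 y1 u1 := mY1U1U2Y0_eq' p P2 hP1sum y1 u1 u2 y0
      have h_mU2eq : mU2Y0 p P1 P2 u2 y0 = mU2Y0' p P2 u2 y0 := mU2Y0_eq p P2 hP1sum u2 y0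
      have hbp : 0 < b x u1 u2 y0 y1 := div_pos (mul_pos hrp h_mXU12) h_mXU2
      have harg1 : 0 < mY1U1U2Y0 p P1 P2 y1 u1 u2 y0 * mU2Y0 p P1 P2 u2 y0 /
          (mY1U2Y0 p P1 P2 y1 u2 y0 * mU12Y0 p P1 P2 u1 u2 y0) := by
        rw [h_mY1U1U2, h_mU2eq]
        exact div_pos (mul_pos (mul_pos h_mY1U2 hP1p) h_mU2') (mul_pos h_mY1U2 h_mU12)
      have harg2 : 0 < mXU12Y0 p P1 P2 x u1 u2 y0 / mU12Y0 p P1 P2 u1 u2 y0 :=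
        div_pos h_mXU12 h_mU12
      have harg3 : 0 < mXU2Y0' p P2 x u2 y0 / mU2Y0' p P2 u2 y0 := div_pos h_mXU2 h_mU2'
      have hcomb : Real.log (mY1U1U2Y0 p P1 P2 y1 u1 u2 y0 * mU2Y0 p P1 P2 u2 y0 /
            (mY1U2Y0 p P1 P2 y1 u2 y0 * mU12Y0 p P1 P2 u1 u2 y0))
          - Real.log (mXU12Y0 p P1 P2 x u1 u2 y0 / mU12Y0 p P1 P2 u1 u2 y0)
          + Real.log (mXU2Y0' p P2 x u2 y0 / mU2Y0' p P2 u2 y0)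
          = Real.log (q x y1 u1 u2 y0 / b x u1 u2 y0 y1) := by
        rw [← Real.log_div harg1.ne' harg2.ne', ← Real.log_mul (div_pos harg1 harg2).ne'
          harg3.ne']
        congr 1
        rw [hb_def, hqr, h_mY1U1U2, h_mU2eq]
        field_simp
      calc q x y1 u1 u2 y0 - b x u1 u2 y0 y1
          ≤ q x y1 u1 u2 y0 * Real.log (q x y1 u1 u2 y0 / b x u1 u2 y0 y1) :=
            gibbs_point h0.le hbp.le fun _ => hbp.ne'
        _ = _ := by rw [← hcomb]; ring
  -- sum of q is 1, sum of b is ≤ 1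
  have hSq : (∑ x, ∑ u1, ∑ u2, ∑ y0, ∑ y1, q x y1 u1 u2 y0) = 1 := by
    rw [show (∑ x, ∑ u1, ∑ u2, ∑ y0, ∑ y1, q x y1 u1 u2 y0)
        = ∑ x, ∑ u2, ∑ y0, ∑ y1, ∑ u1, q x y1 u1 u2 y0 from
      Finset.sum_congr rfl fun x _ =>
        (sum_comm4 fun u2 y0 y1 u1 => q x y1 u1 u2 y0).symm]
    rw [show (∑ x, ∑ u2, ∑ y0, ∑ y1, ∑ u1, q x y1 u1 u2 y0)
        = ∑ x, ∑ u2, ∑ y0, mXU2Y0' p P2 x u2 y0 from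
      Finset.sum_congr rfl fun x _ => Finset.sum_congr rfl fun u2 _ =>
        Finset.sum_congr rfl fun y0 _ => by
          rw [mXU2Y0'_eq]
          exact Finset.sum_congr rfl fun y1 _ => sum_u1_q p P2 hP1sum x y1 u2 y0]
    exact TM1 p P2 hpsum hP2sum
  have hSb : (∑ x, ∑ u1, ∑ u2, ∑ y0, ∑ y1, b x u1 u2 y0 y1) ≤ 1 := by
    have reord : ∀ x, (∑ u1, ∑ u2, ∑ y0, ∑ y1, b x u1 u2 y0 y1)
        = ∑ u2, ∑ y0, ∑ u1, ∑ y1, b x u1 u2 y0 y1 := by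
      intro x
      rw [Finset.sum_comm]
      exact Finset.sum_congr rfl fun u2 _ => Finset.sum_comm
    have inner : ∀ x u2 y0, (∑ u1, ∑ y1, b x u1 u2 y0 y1) ≤ mXU2Y0' p P2 x u2 y0 := by
      intro x u2 y0
      have e0 : (∑ u1, ∑ y1, b x u1 u2 y0 y1)
          = (∑ y1, r x y1 u2 y0) * (∑ u1, mXU12Y0 p P1 P2 x u1 u2 y0)
            / mXU2Y0' p P2 x u2 y0 := by
        rw [hb_def]
        simp only [Finset.sum_div, Finset.sum_mul, Finset.mul_sum]
        try rw [Finset.sum_comm]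
      rw [e0, ← mXU2Y0'_eq, sum_u1_mXU12Y0 p P2 hP1sum]
      rcases eq_or_lt_of_le (show (0:ℝ) ≤ mXU2Y0' p P2 x u2 y0 from by
        rw [mXU2Y0'_eq]; exact Finset.sum_nonneg fun i _ => hrnn _ _ _ _) with h | h
      · rw [← h]; simp
      · rw [mul_div_assoc, div_self h.ne', mul_one]
    calc (∑ x, ∑ u1, ∑ u2, ∑ y0, ∑ y1, b x u1 u2 y0 y1)
        = ∑ x, ∑ u2, ∑ y0, ∑ u1, ∑ y1, b x u1 u2 y0 y1 :=
          Finset.sum_congr rfl fun x _ => reord x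
      _ ≤ ∑ x, ∑ u2, ∑ y0, mXU2Y0' p P2 x u2 y0 :=
          Finset.sum_le_sum fun x _ => Finset.sum_le_sum fun u2 _ =>
            Finset.sum_le_sum fun y0 _ => inner x u2 y0
      _ = 1 := TM1 p P2 hpsum hP2sum
  -- combine
  have mid : (∑ x, ∑ u1, ∑ u2, ∑ y0, ∑ y1, (q x y1 u1 u2 y0 - b x u1 u2 y0 y1))
      ≤ ∑ x, ∑ u1, ∑ u2, ∑ y0, ∑ y1,
        (q x y1 u1 u2 y0 * Real.log (mY1U1U2Y0 p P1 P2 y1 u1 u2 y0 * mU2Y0 p P1 P2 u2 y0 /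
          (mY1U2Y0 p P1 P2 y1 u2 y0 * mU12Y0 p P1 P2 u1 u2 y0))
        - q x y1 u1 u2 y0 * Real.log (mXU12Y0 p P1 P2 x u1 u2 y0 / mU12Y0 p P1 P2 u1 u2 y0)
        + q x y1 u1 u2 y0 * Real.log (mXU2Y0' p P2 x u2 y0 / mU2Y0' p P2 u2 y0)) :=
    Finset.sum_le_sum fun x _ => Finset.sum_le_sum fun u1 _ =>
      Finset.sum_le_sum fun u2 _ => Finset.sum_le_sum fun y0 _ =>
        Finset.sum_le_sum fun y1 _ => key x u1 u2 y0 y1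
  rw [E1, E2, E3]
  simp only [Finset.sum_sub_distrib, Finset.sum_add_distrib] at mid
  linarith [hSq, hSb, mid]

end Main2

section Delta
set_option linter.unusedSectionVars false
set_option maxHeartbeats 1600000

variable [DecidableEq U1] (u0 : U1)

lemma delta_sum : ∀ y1 : Y1, ∑ u1, (fun (_ : Y1) u1 => if u1 = u0 then (1:ℝ) else 0) y1 u1 = 1 := by
  intro y1
  simp

lemma mXU12Y0_delta (x : X) (u1 : U1) (u2 : U2) (y0 : Y0) :
    mXU12Y0 p (fun _ u1 => if u1 = u0 then (1:ℝ) else 0) P2 x u1 u2 y0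
      = if u1 = u0 then mXU2Y0' p P2 x u2 y0 else 0 := by
  by_cases h : u1 = u0 <;> simp [mXU12Y0, mXU2Y0', joint, h]

lemma mU12Y0_delta (u1 : U1) (u2 : U2) (y0 : Y0) :
    mU12Y0 p (fun _ u1 => if u1 = u0 then (1:ℝ) else 0) P2 u1 u2 y0
      = if u1 = u0 then mU2Y0' p P2 u2 y0 else 0 := by
  rw [mU12Y0_eq, mU2Y0'_eq]
  simp_rw [mXU12Y0_delta]
  by_cases h : u1 = u0 <;> simp [h]

lemma mY1U1U2Y0_delta (y1 : Y1) (u1 : U1) (u2 : U2) (y0 : Y0) :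
    mY1U1U2Y0 p (fun _ u1 => if u1 = u0 then (1:ℝ) else 0) P2 y1 u1 u2 y0
      = if u1 = u0 then mY1U2Y0 p (fun _ u1 => if u1 = u0 then (1:ℝ) else 0) P2 y1 u2 y0
        else 0 := by
  rw [mY1U1U2Y0_eq' p P2 (delta_sum u0) y1 u1 u2 y0]
  by_cases h : u1 = u0 <;> simp [h]

lemma HXgU12Y0_delta :
    HXgU12Y0 p (fun _ u1 => if u1 = u0 then (1:ℝ) else 0) P2 = HXgU2Y0' p P2 := by
  unfold HXgU12Y0 HXgU2Y0'
  congr 1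
  refine Finset.sum_congr rfl fun x _ => ?_
  rw [Finset.sum_comm]
  refine Finset.sum_congr rfl fun u2 _ => ?_
  rw [Finset.sum_comm]
  refine Finset.sum_congr rfl fun y0 _ => ?_
  rw [Finset.sum_eq_single u0]
  · rw [mXU12Y0_delta, mU12Y0_delta, if_pos rfl, if_pos rfl]
  · intro u1 _ h
    rw [mXU12Y0_delta, if_neg h, zero_mul]
  · intro h
    exact absurd (Finset.mem_univ u0) h

lemma I1_delta :
    I1 p (fun _ u1 => if u1 = u0 then (1:ℝ) else 0) P2 = 0 := by
  unfold I1
  refine Finset.sum_eq_zero fun y1 _ => ?_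
  rw [Finset.sum_eq_single u0]
  · refine Finset.sum_eq_zero fun u2 _ => Finset.sum_eq_zero fun y0 _ => ?_
    rw [mY1U1U2Y0_delta, mU12Y0_delta, if_pos rfl, if_pos rfl,
      mU2Y0_eq p P2 (delta_sum u0)]
    rcases eq_or_ne (mY1U2Y0 p (fun _ u1 => if u1 = u0 then (1:ℝ) else 0) P2 y1 u2 y0
        * mU2Y0' p P2 u2 y0) 0 with h | h
    · rw [h, zero_div, Real.log_zero, mul_zero]
    · rw [div_self h, Real.log_one, mul_zero]
  · intro u1 _ h
    refine Finset.sum_eq_zero fun u2 _ => Finset.sum_eq_zero fun y0 _ => ?_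
    rw [mY1U1U2Y0_delta, if_neg h, zero_mul]
  · intro h
    exact absurd (Finset.mem_univ u0) h

end Delta

/-- In the variational CEO cost, the parameter `s1` can be restricted to `(0,1]`:
if `s1 > 1`, then for every encoder `P1`,
`F_s(P) = H(X|U1,U2,Y0) + s1 I(Y1;U1|U2,Y0) + s2 I(Y2;U2|Y0) ≥ H(X|U2,Y0) + s2 I(Y2;U2|Y0)`,
and the latter value is attained by taking `U1` constant; hence
`min_P F_s(P) = H(X|U2,Y0) + s2 I(Y2;U2|Y0)` whenever `s1 > 1`. -/
theorem stmt5 [DecidableEq U1] (s1 s2 : ℝ) (hs1 : 1 < s1) (hs2 : 0 < s2)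
    (hp : ∀ x y0 y1 y2, 0 ≤ p x y0 y1 y2)
    (hpsum : ∑ x, ∑ y0, ∑ y1, ∑ y2, p x y0 y1 y2 = 1)
    (hP2 : ∀ y2 u2, 0 ≤ P2 y2 u2) (hP2sum : ∀ y2, ∑ u2, P2 y2 u2 = 1) :
    (∀ P1 : Y1 → U1 → ℝ, (∀ y1 u1, 0 ≤ P1 y1 u1) → (∀ y1, ∑ u1, P1 y1 u1 = 1) →
        HXgU2Y0' p P2 + s2 * I2' p P2 ≤ Fs p P1 P2 s1 s2) ∧
      ∀ u0 : U1,
        Fs p (fun _ u1 => if u1 = u0 then (1 : ℝ) else 0) P2 s1 s2 =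
          HXgU2Y0' p P2 + s2 * I2' p P2 := by
  constructor
  · intro P1 hP1 hP1sum
    have hI2 : I2 p P1 P2 = I2' p P2 := I2_eq p P2 hP1sum
    have hA : 0 ≤ I1 p P1 P2 := I1_nonneg p P2 hp hpsum hP1 hP1sum hP2 hP2sum
    have hB : HXgU2Y0' p P2 ≤ HXgU12Y0 p P1 P2 + I1 p P1 P2 :=
      HXg_le p P2 hp hpsum hP1 hP1sum hP2 hP2sum
    have hs : I1 p P1 P2 ≤ s1 * I1 p P1 P2 := by nlinarith
    unfold Fs
    rw [hI2]
    linarith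
  · intro u0
    unfold Fs
    rw [HXgU12Y0_delta p P2 u0, I1_delta p P2 u0, I2_eq p P2 (delta_sum u0), mul_zero,
      add_zero]

end CEO
end
end

section
/- For fixed auxiliary pmfs Q, the minimizer over P_{U_k|Y_k} of the variational CEO objective F_s(P,Q), subject to Σ_{u_k} p(u_k|y_k) = 1 for each y_k, is the Gibbs-type distribution p(u_k|y_k) = q(u_k) exp(−ψ_k(u_k,y_k)) / Σ_{u_k'} q(u_k') exp(−ψ_k(u_k',y_k)), where ψ_k(u_k,y_k) = ((1−s1)/s_k) E_{U_{k̄},Y0|y_k} D(P_{X|y_k,U_{k̄},Y0}‖Q_{X|u_k,U_{k̄},Y0}) + (s1/s_k) E_{Y0|y_k} D(P_{X|y_k,Y0}‖Q_{X|u_k,Y0}) + D(P_{Y0|y_k}‖Q_{Y0|u_k}). -/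
open scoped BigOperators

noncomputable section

namespace CEO

variable {X Y0 Y1 Y2 U1 U2 : Type*}
  [Fintype X] [Fintype Y0] [Fintype Y1] [Fintype Y2] [Fintype U1] [Fintype U2]
variable (p : X → Y0 → Y1 → Y2 → ℝ) (P1 : Y1 → U1 → ℝ) (P2 : Y2 → U2 → ℝ)

def HXgY0 : ℝ := -∑ x, ∑ y0, mXY0 p x y0 * Real.log (mXY0 p x y0 / mY0 p y0)

def HY0 : ℝ := -∑ y0, mY0 p y0 * Real.log (mY0 p y0)

/-- The variational CEO cost `F_s(P, Q)` of the paper (eq. (24)). -/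
def FsQ (s1 s2 : ℝ)
    (QX12 : U1 → U2 → Y0 → X → ℝ) (QX1 : U1 → Y0 → X → ℝ) (QX2 : U2 → Y0 → X → ℝ)
    (QU1 : U1 → ℝ) (QU2 : U2 → ℝ)
    (QY01 : U1 → Y0 → ℝ) (QY02 : U2 → Y0 → ℝ) : ℝ :=
  -s1 * HXgY0 p - (s1 + s2) * HY0 p
    + ∑ x, ∑ y0, ∑ y1, ∑ y2, ∑ u1, ∑ u2, joint p P1 P2 x y0 y1 y2 u1 u2 *
      ((1 - s1) * (-Real.log (QX12 u1 u2 y0 x))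
        + s1 * (-Real.log (QX1 u1 y0 x)) + s1 * (-Real.log (QX2 u2 y0 x))
        + s1 * Real.log (P1 y1 u1 / QU1 u1) + s2 * Real.log (P2 y2 u2 / QU2 u2)
        + s1 * (-Real.log (QY01 u1 y0)) + s2 * (-Real.log (QY02 u2 y0)))

/-- Kullback–Leibler divergence between finitely supported distributions. -/
def klDiv {α : Type*} [Fintype α] (a b : α → ℝ) : ℝ := ∑ t, a t * Real.log (a t / b t)

/-- Conditional pmf `P(u2, y0 | y1)`. -/
def cU2Y0gY1 (u2 : U2) (y0 : Y0) (y1 : Y1) : ℝ :=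
  (∑ x, ∑ y2, p x y0 y1 y2 * P2 y2 u2) / mY1 p y1

/-- Conditional pmf `P(x | y1, u2, y0)`. -/
def cXgY1U2Y0 (x : X) (y1 : Y1) (u2 : U2) (y0 : Y0) : ℝ :=
  (∑ y2, p x y0 y1 y2 * P2 y2 u2) / (∑ x', ∑ y2, p x' y0 y1 y2 * P2 y2 u2)

/-- Conditional pmf `P(y0 | y1)`. -/
def cY0gY1 (y0 : Y0) (y1 : Y1) : ℝ := (∑ x, ∑ y2, p x y0 y1 y2) / mY1 p y1

/-- Conditional pmf `P(x | y1, y0)`. -/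
def cXgY1Y0 (x : X) (y1 : Y1) (y0 : Y0) : ℝ :=
  (∑ y2, p x y0 y1 y2) / (∑ x', ∑ y2, p x' y0 y1 y2)

/-- Conditional pmf `P(u1, y0 | y2)`. -/
def cU1Y0gY2 (u1 : U1) (y0 : Y0) (y2 : Y2) : ℝ :=
  (∑ x, ∑ y1, p x y0 y1 y2 * P1 y1 u1) / mY2 p y2

/-- Conditional pmf `P(x | y2, u1, y0)`. -/
def cXgY2U1Y0 (x : X) (y2 : Y2) (u1 : U1) (y0 : Y0) : ℝ :=
  (∑ y1, p x y0 y1 y2 * P1 y1 u1) / (∑ x', ∑ y1, p x' y0 y1 y2 * P1 y1 u1)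

/-- Conditional pmf `P(y0 | y2)`. -/
def cY0gY2 (y0 : Y0) (y2 : Y2) : ℝ := (∑ x, ∑ y1, p x y0 y1 y2) / mY2 p y2

/-- Conditional pmf `P(x | y2, y0)`. -/
def cXgY2Y0 (x : X) (y2 : Y2) (y0 : Y0) : ℝ :=
  (∑ y1, p x y0 y1 y2) / (∑ x', ∑ y1, p x' y0 y1 y2)

/-- The exponent `ψ₁(u1, y1)` of the paper (eq. (30)) for `k = 1`. -/
def psi1 (s1 : ℝ) (QX12 : U1 → U2 → Y0 → X → ℝ) (QX1 : U1 → Y0 → X → ℝ)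
    (QY01 : U1 → Y0 → ℝ) (u1 : U1) (y1 : Y1) : ℝ :=
  ((1 - s1) / s1) * ∑ u2, ∑ y0, cU2Y0gY1 p P2 u2 y0 y1 *
      klDiv (fun x => cXgY1U2Y0 p P2 x y1 u2 y0) (fun x => QX12 u1 u2 y0 x)
    + (s1 / s1) * ∑ y0, cY0gY1 p y0 y1 *
      klDiv (fun x => cXgY1Y0 p x y1 y0) (fun x => QX1 u1 y0 x)
    + klDiv (fun y0 => cY0gY1 p y0 y1) (fun y0 => QY01 u1 y0)

/-- The exponent `ψ₂(u2, y2)` of the paper (eq. (30)) for `k = 2`. -/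
def psi2 (s1 s2 : ℝ) (QX12 : U1 → U2 → Y0 → X → ℝ) (QX2 : U2 → Y0 → X → ℝ)
    (QY02 : U2 → Y0 → ℝ) (u2 : U2) (y2 : Y2) : ℝ :=
  ((1 - s1) / s2) * ∑ u1, ∑ y0, cU1Y0gY2 p P1 u1 y0 y2 *
      klDiv (fun x => cXgY2U1Y0 p P1 x y2 u1 y0) (fun x => QX12 u1 u2 y0 x)
    + (s1 / s2) * ∑ y0, cY0gY2 p y0 y2 *
      klDiv (fun x => cXgY2Y0 p x y2 y0) (fun x => QX2 u2 y0 x)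
    + klDiv (fun y0 => cY0gY2 p y0 y2) (fun y0 => QY02 u2 y0)


/-! ### Auxiliary lemmas for the proof of `stmt14` -/

/-- Gibbs inequality / equality case: a strictly positive pmf minimizing the
linear-plus-entropy functional on the simplex must equal the Gibbs distribution. -/
lemma gibbs_opt {α : Type*} [Fintype α] (w q : α → ℝ) (hq : ∀ u, 0 < q u)
    (P : α → ℝ) (hP : ∀ u, 0 < P u) (hPs : ∑ u, P u = 1)
    (hmin : ∀ P' : α → ℝ, (∀ u, 0 ≤ P' u) → ∑ u, P' u = 1 →
      ∑ u, P u * (Real.log (P u) + (w u - Real.log (q u))) ≤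
      ∑ u, P' u * (Real.log (P' u) + (w u - Real.log (q u)))) :
    ∀ u, P u = q u * Real.exp (-w u) / ∑ u', q u' * Real.exp (-w u') := by
  classical
  have hne : Nonempty α := by
    by_contra h
    rw [not_nonempty_iff] at h
    simp [Finset.univ_eq_empty] at hPs
  set Z : ℝ := ∑ u', q u' * Real.exp (-w u') with hZ
  have hZpos : 0 < Z := Finset.sum_pos (fun u _ => mul_pos (hq u) (Real.exp_pos _))
    Finset.univ_nonempty
  set Pstar : α → ℝ := fun u => q u * Real.exp (-w u) / Z with hPstar
  have hPstarpos : ∀ u, 0 < Pstar u := fun u => div_pos (mul_pos (hq u) (Real.exp_pos _)) hZpos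
  have hPstarsum : ∑ u, Pstar u = 1 := by
    rw [hPstar]
    rw [← Finset.sum_div]
    exact div_self hZpos.ne'
  have hlogPstar : ∀ u, Real.log (Pstar u) = Real.log (q u) - w u - Real.log Z := by
    intro u
    rw [hPstar]
    rw [Real.log_div (mul_pos (hq u) (Real.exp_pos _)).ne' hZpos.ne',
      Real.log_mul (hq u).ne' (Real.exp_pos _).ne', Real.log_exp]
    ring
  have hval : ∑ u, Pstar u * (Real.log (Pstar u) + (w u - Real.log (q u))) = -Real.log Z := by
    have h : ∀ u, Pstar u * (Real.log (Pstar u) + (w u - Real.log (q u)))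
        = Pstar u * (-Real.log Z) := by
      intro u; rw [hlogPstar u]; ring
    rw [Finset.sum_congr rfl fun u _ => h u, ← Finset.sum_mul, hPstarsum, one_mul]
  have hle := hmin Pstar (fun u => (hPstarpos u).le) hPstarsum
  rw [hval] at hle
  have hlhs : ∑ u, P u * (Real.log (P u) + (w u - Real.log (q u)))
      = (∑ u, P u * (Real.log (P u) - Real.log (Pstar u))) - Real.log Z := by
    have h : ∀ u, P u * (Real.log (P u) + (w u - Real.log (q u)))
        = P u * (Real.log (P u) - Real.log (Pstar u)) + P u * (-Real.log Z) := by
      intro u; rw [hlogPstar u]; ring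
    rw [Finset.sum_congr rfl fun u _ => h u, Finset.sum_add_distrib, ← Finset.sum_mul, hPs]
    ring
  rw [hlhs] at hle
  have hKLle : ∑ u, P u * (Real.log (P u) - Real.log (Pstar u)) ≤ 0 := by linarith
  by_contra hcon
  push_neg at hcon
  obtain ⟨u0, hu0⟩ := hcon
  have key : ∀ u ∈ Finset.univ, P u * (Real.log (Pstar u) - Real.log (P u)) ≤ Pstar u - P u := by
    intro u _
    have h1 : Real.log (Pstar u / P u) ≤ Pstar u / P u - 1 :=
      Real.log_le_sub_one_of_pos (div_pos (hPstarpos u) (hP u))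
    rw [Real.log_div (hPstarpos u).ne' (hP u).ne'] at h1
    have h2 := mul_le_mul_of_nonneg_left h1 (hP u).le
    calc P u * (Real.log (Pstar u) - Real.log (P u)) ≤ P u * (Pstar u / P u - 1) := h2
      _ = Pstar u - P u := by rw [mul_sub, mul_div_cancel₀ _ (hP u).ne', mul_one]
  have strict : P u0 * (Real.log (Pstar u0) - Real.log (P u0)) < Pstar u0 - P u0 := by
    have hne' : Pstar u0 / P u0 ≠ 1 := by
      intro h
      exact hu0 ((div_eq_one_iff_eq (hP u0).ne').mp h).symm
    have h1 : Real.log (Pstar u0 / P u0) < Pstar u0 / P u0 - 1 :=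
      Real.log_lt_sub_one_of_pos (div_pos (hPstarpos u0) (hP u0)) hne'
    rw [Real.log_div (hPstarpos u0).ne' (hP u0).ne'] at h1
    have h2 := (mul_lt_mul_iff_right₀ (hP u0)).mpr h1
    calc P u0 * (Real.log (Pstar u0) - Real.log (P u0)) < P u0 * (Pstar u0 / P u0 - 1) := h2
      _ = Pstar u0 - P u0 := by rw [mul_sub, mul_div_cancel₀ _ (hP u0).ne', mul_one]
  have hsumlt : ∑ u, P u * (Real.log (Pstar u) - Real.log (P u)) < ∑ u, (Pstar u - P u) :=
    Finset.sum_lt_sum key ⟨u0, Finset.mem_univ u0, strict⟩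
  rw [Finset.sum_sub_distrib, hPstarsum, hPs, sub_self] at hsumlt
  have heq : ∑ u, P u * (Real.log (Pstar u) - Real.log (P u))
      = -∑ u, P u * (Real.log (P u) - Real.log (Pstar u)) := by
    rw [← Finset.sum_neg_distrib]
    exact Finset.sum_congr rfl fun u _ => by ring
  rw [heq] at hsumlt
  linarith

lemma sum_rot3 {A B C : Type*} [Fintype A] [Fintype B] [Fintype C] (f : A → B → C → ℝ) :
    ∑ a, ∑ b, ∑ c, f a b c = ∑ c, ∑ b, ∑ a, f a b c := by
  calc ∑ a, ∑ b, ∑ c, f a b c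
      = ∑ a, ∑ c, ∑ b, f a b c := Finset.sum_congr rfl fun a _ => Finset.sum_comm
    _ = ∑ c, ∑ a, ∑ b, f a b c := Finset.sum_comm
    _ = ∑ c, ∑ b, ∑ a, f a b c := Finset.sum_congr rfl fun c _ => Finset.sum_comm

lemma cancel3 {a b c : ℝ} (ha : a ≠ 0) : a * (b / a * c) = b * c := by
  field_simp

lemma sum_pos1 {A : Type*} [Fintype A] [Nonempty A] {f : A → ℝ} (h : ∀ a, 0 < f a) :
    0 < ∑ a, f a := Finset.sum_pos (fun a _ => h a) Finset.univ_nonempty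

lemma sum_pos2 {A B : Type*} [Fintype A] [Fintype B] [Nonempty A] [Nonempty B]
    {f : A → B → ℝ} (h : ∀ a b, 0 < f a b) : 0 < ∑ a, ∑ b, f a b :=
  sum_pos1 fun a => sum_pos1 (h a)

lemma sum_pos3 {A B C : Type*} [Fintype A] [Fintype B] [Fintype C] [Nonempty A] [Nonempty B]
    [Nonempty C] {f : A → B → C → ℝ} (h : ∀ a b c, 0 < f a b c) : 0 < ∑ a, ∑ b, ∑ c, f a b c :=
  sum_pos1 fun a => sum_pos2 (h a)

lemma alg1 {s m a b c t : ℝ} (hs : s ≠ 0) :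
    s * m * (t / s * a + s / s * b + c) = t * (m * a) + s * (m * b) + s * (m * c) := by
  field_simp

/-- Generic conditional-KL expansion. -/
lemma kl_gen {A C : Type*} [Fintype A] [Fintype C] (g : A → C → ℝ) (Q : A → ℝ)
    (hn : ∀ a, 0 < ∑ c, g a c) (hN : 0 < ∑ a', ∑ c, g a' c) (hQ : ∀ a, 0 < Q a)
    (m : ℝ) (hm : m ≠ 0) :
    m * ((∑ a', ∑ c, g a' c) / m * ∑ a, (∑ c, g a c) / (∑ a', ∑ c, g a' c) *
        Real.log ((∑ c, g a c) / (∑ a', ∑ c, g a' c) / Q a))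
      = ∑ a, (∑ c, g a c) *
          (Real.log ((∑ c, g a c) / (∑ a', ∑ c, g a' c)) - Real.log (Q a)) := by
  rw [cancel3 hm, Finset.mul_sum]
  refine Finset.sum_congr rfl fun a _ => ?_
  rw [Real.log_div (div_pos (hn a) hN).ne' (hQ a).ne', cancel3 hN.ne']

lemma kl0_gen {B : Type*} [Fintype B] (M Q : B → ℝ) (hM : ∀ b, 0 < M b) (hQ : ∀ b, 0 < Q b)
    (m : ℝ) (hm : 0 < m) :
    m * (∑ b, M b / m * Real.log (M b / m / Q b))
      = ∑ b, M b * (Real.log (M b / m) - Real.log (Q b)) := by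
  rw [Finset.mul_sum]
  refine Finset.sum_congr rfl fun b _ => ?_
  rw [Real.log_div (div_pos (hM b) hm).ne' (hQ b).ne', cancel3 hm.ne']

lemma marg_gen {A B C D : Type*} [Fintype A] [Fintype B] [Fintype C] [Fintype D]
    (q : A → B → C → ℝ) (W : C → D → ℝ) (hW : ∀ c, ∑ d, W c d = 1) :
    ∑ a, ∑ b, ∑ c, ∑ d, q a b c * W c d = ∑ a, ∑ b, ∑ c, q a b c := by
  refine Finset.sum_congr rfl fun a _ => Finset.sum_congr rfl fun b _ =>
    Finset.sum_congr rfl fun c _ => ?_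
  rw [← Finset.mul_sum, hW, mul_one]

lemma splitA {A B C D : Type*} [Fintype A] [Fintype B] [Fintype C] [Fintype D]
    (q : A → B → C → ℝ) (W : C → D → ℝ) (T : D → B → A → ℝ) :
    ∑ a, ∑ b, ∑ c, ∑ d, q a b c * W c d * T d b a
      = ∑ d, ∑ b, ∑ a, (∑ c, q a b c * W c d) * T d b a := by
  rw [← sum_rot3 fun a b d => (∑ c, q a b c * W c d) * T d b a]
  refine Finset.sum_congr rfl fun a _ => Finset.sum_congr rfl fun b _ => ?_
  rw [Finset.sum_comm]
  exact Finset.sum_congr rfl fun d _ => (Finset.sum_mul _ _ _).symm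

lemma splitB {A B C D : Type*} [Fintype A] [Fintype B] [Fintype C] [Fintype D]
    (q : A → B → C → ℝ) (W : C → D → ℝ) (hW : ∀ c, ∑ d, W c d = 1) (T : B → A → ℝ) :
    ∑ a, ∑ b, ∑ c, ∑ d, q a b c * W c d * T b a
      = ∑ b, ∑ a, (∑ c, q a b c) * T b a := by
  have h : ∀ a b, ∑ c, ∑ d, q a b c * W c d * T b a = (∑ c, q a b c) * T b a := by
    intro a b
    rw [Finset.sum_mul]
    refine Finset.sum_congr rfl fun c _ => ?_
    calc ∑ d, q a b c * W c d * T b a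
        = ∑ d, q a b c * T b a * W c d := Finset.sum_congr rfl fun d _ => by ring
      _ = q a b c * T b a * ∑ d, W c d := by rw [← Finset.mul_sum]
      _ = q a b c * T b a := by rw [hW, mul_one]
  calc ∑ a, ∑ b, ∑ c, ∑ d, q a b c * W c d * T b a
      = ∑ a, ∑ b, (∑ c, q a b c) * T b a :=
        Finset.sum_congr rfl fun a _ => Finset.sum_congr rfl fun b _ => h a b
    _ = ∑ b, ∑ a, (∑ c, q a b c) * T b a := Finset.sum_comm

lemma splitC {A B C D : Type*} [Fintype A] [Fintype B] [Fintype C] [Fintype D]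
    (q : A → B → C → ℝ) (W : C → D → ℝ) (hW : ∀ c, ∑ d, W c d = 1) (T : B → ℝ) :
    ∑ a, ∑ b, ∑ c, ∑ d, q a b c * W c d * T b
      = ∑ b, (∑ a, ∑ c, q a b c) * T b := by
  have h : ∀ a b, ∑ c, ∑ d, q a b c * W c d * T b = (∑ c, q a b c) * T b := by
    intro a b
    rw [Finset.sum_mul]
    refine Finset.sum_congr rfl fun c _ => ?_
    calc ∑ d, q a b c * W c d * T b
        = ∑ d, q a b c * T b * W c d := Finset.sum_congr rfl fun d _ => by ring
      _ = q a b c * T b * ∑ d, W c d := by rw [← Finset.mul_sum]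
      _ = q a b c * T b := by rw [hW, mul_one]
  calc ∑ a, ∑ b, ∑ c, ∑ d, q a b c * W c d * T b
      = ∑ a, ∑ b, (∑ c, q a b c) * T b :=
        Finset.sum_congr rfl fun a _ => Finset.sum_congr rfl fun b _ => h a b
    _ = ∑ b, ∑ a, (∑ c, q a b c) * T b := Finset.sum_comm
    _ = ∑ b, (∑ a, ∑ c, q a b c) * T b :=
        Finset.sum_congr rfl fun b _ => (Finset.sum_mul _ _ _).symm

lemma sum4_mul_const {A B C D : Type*} [Fintype A] [Fintype B] [Fintype C] [Fintype D]
    (f : A → B → C → D → ℝ) (r : ℝ) :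
    ∑ a, ∑ b, ∑ c, ∑ d, f a b c d * r = (∑ a, ∑ b, ∑ c, ∑ d, f a b c d) * r := by
  simp only [Finset.sum_mul]

lemma comb3 {A B C : Type*} [Fintype A] [Fintype B] [Fintype C] (t : ℝ)
    (n L q : A → B → C → ℝ) :
    t * (∑ a, ∑ b, ∑ c, n a b c * (L a b c - q a b c))
      - t * (∑ a, ∑ b, ∑ c, n a b c * L a b c)
      = ∑ a, ∑ b, ∑ c, n a b c * (t * -q a b c) := by
  rw [← mul_sub]
  simp only [← Finset.sum_sub_distrib]
  simp only [Finset.mul_sum]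
  exact Finset.sum_congr rfl fun a _ => Finset.sum_congr rfl fun b _ =>
    Finset.sum_congr rfl fun c _ => by ring

lemma comb2 {A B : Type*} [Fintype A] [Fintype B] (t : ℝ) (n L q : A → B → ℝ) :
    t * (∑ a, ∑ b, n a b * (L a b - q a b)) - t * (∑ a, ∑ b, n a b * L a b)
      = ∑ a, ∑ b, n a b * (t * -q a b) := by
  rw [← mul_sub]
  simp only [← Finset.sum_sub_distrib]
  simp only [Finset.mul_sum]
  exact Finset.sum_congr rfl fun a _ => Finset.sum_congr rfl fun b _ => by ring

lemma comb1 {A : Type*} [Fintype A] (t : ℝ) (n L q : A → ℝ) :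
    t * (∑ a, n a * (L a - q a)) - t * (∑ a, n a * L a) = ∑ a, n a * (t * -q a) := by
  rw [← mul_sub]
  simp only [← Finset.sum_sub_distrib]
  simp only [Finset.mul_sum]
  exact Finset.sum_congr rfl fun a _ => by ring

lemma reorder61 (f : X → Y0 → Y1 → Y2 → U1 → U2 → ℝ) :
    ∑ x, ∑ y0, ∑ y1, ∑ y2, ∑ u1, ∑ u2, f x y0 y1 y2 u1 u2
      = ∑ y1, ∑ u1, ∑ x, ∑ y0, ∑ y2, ∑ u2, f x y0 y1 y2 u1 u2 := by
  calc ∑ x, ∑ y0, ∑ y1, ∑ y2, ∑ u1, ∑ u2, f x y0 y1 y2 u1 u2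
      = ∑ x, ∑ y1, ∑ y0, ∑ y2, ∑ u1, ∑ u2, f x y0 y1 y2 u1 u2 :=
        Finset.sum_congr rfl fun x _ => Finset.sum_comm
    _ = ∑ y1, ∑ x, ∑ y0, ∑ y2, ∑ u1, ∑ u2, f x y0 y1 y2 u1 u2 := Finset.sum_comm
    _ = ∑ y1, ∑ x, ∑ y0, ∑ u1, ∑ y2, ∑ u2, f x y0 y1 y2 u1 u2 :=
        Finset.sum_congr rfl fun y1 _ => Finset.sum_congr rfl fun x _ =>
          Finset.sum_congr rfl fun y0 _ => Finset.sum_comm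
    _ = ∑ y1, ∑ x, ∑ u1, ∑ y0, ∑ y2, ∑ u2, f x y0 y1 y2 u1 u2 :=
        Finset.sum_congr rfl fun y1 _ => Finset.sum_congr rfl fun x _ => Finset.sum_comm
    _ = ∑ y1, ∑ u1, ∑ x, ∑ y0, ∑ y2, ∑ u2, f x y0 y1 y2 u1 u2 :=
        Finset.sum_congr rfl fun y1 _ => Finset.sum_comm

/-- The `u1`-independent "entropy" part of the linear coefficient for the first encoder. -/
def Ent1 (s1 : ℝ) (y1 : Y1) : ℝ :=
  (1 - s1) * ∑ u2, ∑ y0, ∑ x, (∑ y2, p x y0 y1 y2 * P2 y2 u2) *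
      Real.log (cXgY1U2Y0 p P2 x y1 u2 y0)
    + s1 * ∑ y0, ∑ x, (∑ y2, p x y0 y1 y2) * Real.log (cXgY1Y0 p x y1 y0)
    + s1 * ∑ y0, (∑ x, ∑ y2, p x y0 y1 y2) * Real.log (cY0gY1 p y0 y1)

lemma klA1 (hp : ∀ x y0 y1 y2, 0 < p x y0 y1 y2) (hP2 : ∀ y2 u2, 0 < P2 y2 u2)
    (hX : Nonempty X) (hY0 : Nonempty Y0) (hY2 : Nonempty Y2)
    (QX12 : U1 → U2 → Y0 → X → ℝ) (hQX12 : ∀ u1 u2 y0 x, 0 < QX12 u1 u2 y0 x)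
    (u1 : U1) (y1 : Y1) :
    mY1 p y1 * (∑ u2, ∑ y0, cU2Y0gY1 p P2 u2 y0 y1 *
        klDiv (fun x => cXgY1U2Y0 p P2 x y1 u2 y0) (fun x => QX12 u1 u2 y0 x))
      = ∑ u2, ∑ y0, ∑ x, (∑ y2, p x y0 y1 y2 * P2 y2 u2) *
          (Real.log (cXgY1U2Y0 p P2 x y1 u2 y0) - Real.log (QX12 u1 u2 y0 x)) := by
  haveI := hX; haveI := hY0; haveI := hY2
  have hm : (0:ℝ) < mY1 p y1 := sum_pos3 fun a b c => hp a b y1 c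
  rw [Finset.mul_sum]
  refine Finset.sum_congr rfl fun u2 _ => ?_
  rw [Finset.mul_sum]
  refine Finset.sum_congr rfl fun y0 _ => ?_
  simp only [cU2Y0gY1, cXgY1U2Y0, klDiv, mY1]
  exact kl_gen (fun x y2 => p x y0 y1 y2 * P2 y2 u2) (fun x => QX12 u1 u2 y0 x)
    (fun a => sum_pos1 fun c => mul_pos (hp a y0 y1 c) (hP2 c u2))
    (sum_pos2 fun a c => mul_pos (hp a y0 y1 c) (hP2 c u2))
    (fun a => hQX12 u1 u2 y0 a) _ hm.ne'

lemma klB1 (hp : ∀ x y0 y1 y2, 0 < p x y0 y1 y2)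
    (hX : Nonempty X) (hY0 : Nonempty Y0) (hY2 : Nonempty Y2)
    (QX1 : U1 → Y0 → X → ℝ) (hQX1 : ∀ u1 y0 x, 0 < QX1 u1 y0 x) (u1 : U1) (y1 : Y1) :
    mY1 p y1 * (∑ y0, cY0gY1 p y0 y1 *
        klDiv (fun x => cXgY1Y0 p x y1 y0) (fun x => QX1 u1 y0 x))
      = ∑ y0, ∑ x, (∑ y2, p x y0 y1 y2) *
          (Real.log (cXgY1Y0 p x y1 y0) - Real.log (QX1 u1 y0 x)) := by
  haveI := hX; haveI := hY0; haveI := hY2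
  have hm : (0:ℝ) < mY1 p y1 := sum_pos3 fun a b c => hp a b y1 c
  rw [Finset.mul_sum]
  refine Finset.sum_congr rfl fun y0 _ => ?_
  simp only [cY0gY1, cXgY1Y0, klDiv, mY1]
  exact kl_gen (fun x y2 => p x y0 y1 y2) (fun x => QX1 u1 y0 x)
    (fun a => sum_pos1 fun c => hp a y0 y1 c)
    (sum_pos2 fun a c => hp a y0 y1 c)
    (fun a => hQX1 u1 y0 a) _ hm.ne'

lemma klC1 (hp : ∀ x y0 y1 y2, 0 < p x y0 y1 y2)
    (hX : Nonempty X) (hY0 : Nonempty Y0) (hY2 : Nonempty Y2)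
    (QY01 : U1 → Y0 → ℝ) (hQY01 : ∀ u1 y0, 0 < QY01 u1 y0) (u1 : U1) (y1 : Y1) :
    mY1 p y1 * klDiv (fun y0 => cY0gY1 p y0 y1) (fun y0 => QY01 u1 y0)
      = ∑ y0, (∑ x, ∑ y2, p x y0 y1 y2) *
          (Real.log (cY0gY1 p y0 y1) - Real.log (QY01 u1 y0)) := by
  haveI := hX; haveI := hY0; haveI := hY2
  have hm : (0:ℝ) < mY1 p y1 := sum_pos3 fun a b c => hp a b y1 c
  simp only [cY0gY1, klDiv, mY1]
  exact kl0_gen (fun y0 => ∑ x, ∑ y2, p x y0 y1 y2) (fun y0 => QY01 u1 y0)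
    (fun b => sum_pos2 fun a c => hp a b y1 c) (fun b => hQY01 u1 b) _ hm

lemma coeff1 (s1 : ℝ) (hs1 : 0 < s1)
    (hp : ∀ x y0 y1 y2, 0 < p x y0 y1 y2) (hP2 : ∀ y2 u2, 0 < P2 y2 u2)
    (hP2sum : ∀ y2, ∑ u2, P2 y2 u2 = 1)
    (hX : Nonempty X) (hY0 : Nonempty Y0) (hY2 : Nonempty Y2)
    (QX12 : U1 → U2 → Y0 → X → ℝ) (QX1 : U1 → Y0 → X → ℝ) (QY01 : U1 → Y0 → ℝ)
    (hQX12 : ∀ u1 u2 y0 x, 0 < QX12 u1 u2 y0 x) (hQX1 : ∀ u1 y0 x, 0 < QX1 u1 y0 x)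
    (hQY01 : ∀ u1 y0, 0 < QY01 u1 y0) (u1 : U1) (y1 : Y1) :
    ∑ x, ∑ y0, ∑ y2, ∑ u2, p x y0 y1 y2 * P2 y2 u2 *
        ((1 - s1) * (-Real.log (QX12 u1 u2 y0 x)) + s1 * (-Real.log (QX1 u1 y0 x))
          + s1 * (-Real.log (QY01 u1 y0)))
      = s1 * mY1 p y1 * psi1 p P2 s1 QX12 QX1 QY01 u1 y1 - Ent1 p P2 s1 y1 := by
  have e1 := klA1 p P2 hp hP2 hX hY0 hY2 QX12 hQX12 u1 y1
  have e2 := klB1 p hp hX hY0 hY2 QX1 hQX1 u1 y1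
  have e3 := klC1 p hp hX hY0 hY2 QY01 hQY01 u1 y1
  have epsi : s1 * mY1 p y1 * psi1 p P2 s1 QX12 QX1 QY01 u1 y1
      = (1 - s1) * (mY1 p y1 * ∑ u2, ∑ y0, cU2Y0gY1 p P2 u2 y0 y1 *
            klDiv (fun x => cXgY1U2Y0 p P2 x y1 u2 y0) (fun x => QX12 u1 u2 y0 x))
        + s1 * (mY1 p y1 * ∑ y0, cY0gY1 p y0 y1 *
            klDiv (fun x => cXgY1Y0 p x y1 y0) (fun x => QX1 u1 y0 x))
        + s1 * (mY1 p y1 *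
            klDiv (fun y0 => cY0gY1 p y0 y1) (fun y0 => QY01 u1 y0)) := by
    simp only [psi1]
    exact alg1 hs1.ne'
  rw [epsi, e1, e2, e3]
  simp only [Ent1]
  -- split and reorder the left-hand side
  have hA : ∑ x, ∑ y0, ∑ y2, ∑ u2, p x y0 y1 y2 * P2 y2 u2 *
        ((1 - s1) * (-Real.log (QX12 u1 u2 y0 x)))
      = ∑ u2, ∑ y0, ∑ x, (∑ y2, p x y0 y1 y2 * P2 y2 u2) *
          ((1 - s1) * (-Real.log (QX12 u1 u2 y0 x))) :=
    splitA (fun x y0 y2 => p x y0 y1 y2) P2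
      (fun u2 y0 x => (1 - s1) * (-Real.log (QX12 u1 u2 y0 x)))
  have hB : ∑ x, ∑ y0, ∑ y2, ∑ u2, p x y0 y1 y2 * P2 y2 u2 *
        (s1 * (-Real.log (QX1 u1 y0 x)))
      = ∑ y0, ∑ x, (∑ y2, p x y0 y1 y2) * (s1 * (-Real.log (QX1 u1 y0 x))) :=
    splitB (fun x y0 y2 => p x y0 y1 y2) P2 hP2sum
      (fun y0 x => s1 * (-Real.log (QX1 u1 y0 x)))
  have hC : ∑ x, ∑ y0, ∑ y2, ∑ u2, p x y0 y1 y2 * P2 y2 u2 *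
        (s1 * (-Real.log (QY01 u1 y0)))
      = ∑ y0, (∑ x, ∑ y2, p x y0 y1 y2) * (s1 * (-Real.log (QY01 u1 y0))) :=
    splitC (fun x y0 y2 => p x y0 y1 y2) P2 hP2sum
      (fun y0 => s1 * (-Real.log (QY01 u1 y0)))
  have hsplit : ∑ x, ∑ y0, ∑ y2, ∑ u2, p x y0 y1 y2 * P2 y2 u2 *
        ((1 - s1) * (-Real.log (QX12 u1 u2 y0 x)) + s1 * (-Real.log (QX1 u1 y0 x))
          + s1 * (-Real.log (QY01 u1 y0)))
      = (∑ x, ∑ y0, ∑ y2, ∑ u2, p x y0 y1 y2 * P2 y2 u2 *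
            ((1 - s1) * (-Real.log (QX12 u1 u2 y0 x))))
        + (∑ x, ∑ y0, ∑ y2, ∑ u2, p x y0 y1 y2 * P2 y2 u2 *
            (s1 * (-Real.log (QX1 u1 y0 x))))
        + (∑ x, ∑ y0, ∑ y2, ∑ u2, p x y0 y1 y2 * P2 y2 u2 *
            (s1 * (-Real.log (QY01 u1 y0)))) := by
    simp only [← Finset.sum_add_distrib]
    exact Finset.sum_congr rfl fun x _ => Finset.sum_congr rfl fun y0 _ =>
      Finset.sum_congr rfl fun y2 _ => Finset.sum_congr rfl fun u2 _ => by ring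
  rw [hsplit, hA, hB, hC]
  have hc1 : (1 - s1) * (∑ u2, ∑ y0, ∑ x, (∑ y2, p x y0 y1 y2 * P2 y2 u2) *
          (Real.log (cXgY1U2Y0 p P2 x y1 u2 y0) - Real.log (QX12 u1 u2 y0 x)))
        - (1 - s1) * (∑ u2, ∑ y0, ∑ x, (∑ y2, p x y0 y1 y2 * P2 y2 u2) *
          Real.log (cXgY1U2Y0 p P2 x y1 u2 y0))
      = ∑ u2, ∑ y0, ∑ x, (∑ y2, p x y0 y1 y2 * P2 y2 u2) *
          ((1 - s1) * -Real.log (QX12 u1 u2 y0 x)) :=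
    comb3 (1 - s1) (fun u2 y0 x => ∑ y2, p x y0 y1 y2 * P2 y2 u2)
      (fun u2 y0 x => Real.log (cXgY1U2Y0 p P2 x y1 u2 y0))
      (fun u2 y0 x => Real.log (QX12 u1 u2 y0 x))
  have hc2 : s1 * (∑ y0, ∑ x, (∑ y2, p x y0 y1 y2) *
          (Real.log (cXgY1Y0 p x y1 y0) - Real.log (QX1 u1 y0 x)))
        - s1 * (∑ y0, ∑ x, (∑ y2, p x y0 y1 y2) * Real.log (cXgY1Y0 p x y1 y0))
      = ∑ y0, ∑ x, (∑ y2, p x y0 y1 y2) * (s1 * -Real.log (QX1 u1 y0 x)) :=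
    comb2 s1 (fun y0 x => ∑ y2, p x y0 y1 y2)
      (fun y0 x => Real.log (cXgY1Y0 p x y1 y0)) (fun y0 x => Real.log (QX1 u1 y0 x))
  have hc3 : s1 * (∑ y0, (∑ x, ∑ y2, p x y0 y1 y2) *
          (Real.log (cY0gY1 p y0 y1) - Real.log (QY01 u1 y0)))
        - s1 * (∑ y0, (∑ x, ∑ y2, p x y0 y1 y2) * Real.log (cY0gY1 p y0 y1))
      = ∑ y0, (∑ x, ∑ y2, p x y0 y1 y2) * (s1 * -Real.log (QY01 u1 y0)) :=
    comb1 s1 (fun y0 => ∑ x, ∑ y2, p x y0 y1 y2)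
      (fun y0 => Real.log (cY0gY1 p y0 y1)) (fun y0 => Real.log (QY01 u1 y0))
  have hn1 : ∑ u2, ∑ y0, ∑ x, (∑ y2, p x y0 y1 y2 * P2 y2 u2) *
        ((1 - s1) * (-Real.log (QX12 u1 u2 y0 x)))
      = ∑ u2, ∑ y0, ∑ x, (∑ y2, p x y0 y1 y2 * P2 y2 u2) *
        ((1 - s1) * -Real.log (QX12 u1 u2 y0 x)) := rfl
  have hn2 : ∑ y0, ∑ x, (∑ y2, p x y0 y1 y2) * (s1 * (-Real.log (QX1 u1 y0 x)))
      = ∑ y0, ∑ x, (∑ y2, p x y0 y1 y2) * (s1 * -Real.log (QX1 u1 y0 x)) := rfl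
  have hn3 : ∑ y0, (∑ x, ∑ y2, p x y0 y1 y2) * (s1 * (-Real.log (QY01 u1 y0)))
      = ∑ y0, (∑ x, ∑ y2, p x y0 y1 y2) * (s1 * -Real.log (QY01 u1 y0)) := rfl
  rw [hn1, hn2, hn3, ← hc1, ← hc2, ← hc3]
  ring

lemma decomp1 (s1 s2 : ℝ) (hs1 : 0 < s1)
    (hp : ∀ x y0 y1 y2, 0 < p x y0 y1 y2) (hP2 : ∀ y2 u2, 0 < P2 y2 u2)
    (hP2sum : ∀ y2, ∑ u2, P2 y2 u2 = 1)
    (hX : Nonempty X) (hY0 : Nonempty Y0) (hY2 : Nonempty Y2)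
    (QX12 : U1 → U2 → Y0 → X → ℝ) (QX1 : U1 → Y0 → X → ℝ) (QX2 : U2 → Y0 → X → ℝ)
    (QU1 : U1 → ℝ) (QU2 : U2 → ℝ) (QY01 : U1 → Y0 → ℝ) (QY02 : U2 → Y0 → ℝ)
    (hQX12 : ∀ u1 u2 y0 x, 0 < QX12 u1 u2 y0 x) (hQX1 : ∀ u1 y0 x, 0 < QX1 u1 y0 x)
    (hQU1 : ∀ u1, 0 < QU1 u1) (hQY01 : ∀ u1 y0, 0 < QY01 u1 y0)
    (P1' : Y1 → U1 → ℝ) (hP1'0 : ∀ y1 u1, 0 ≤ P1' y1 u1)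
    (hP1's : ∀ y1, ∑ u1, P1' y1 u1 = 1) :
    FsQ p P1' P2 s1 s2 QX12 QX1 QX2 QU1 QU2 QY01 QY02
      = (-s1 * HXgY0 p - (s1 + s2) * HY0 p
          + ∑ y1, ((∑ x, ∑ y0, ∑ y2, ∑ u2, p x y0 y1 y2 * P2 y2 u2 *
                (s1 * (-Real.log (QX2 u2 y0 x)) + s2 * Real.log (P2 y2 u2 / QU2 u2)
                  + s2 * (-Real.log (QY02 u2 y0)))) - Ent1 p P2 s1 y1))
        + s1 * ∑ y1, mY1 p y1 * ∑ u1, P1' y1 u1 *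
            (Real.log (P1' y1 u1)
              + (psi1 p P2 s1 QX12 QX1 QY01 u1 y1 - Real.log (QU1 u1))) := by
  have step : ∀ y1 u1,
      (∑ x, ∑ y0, ∑ y2, ∑ u2, p x y0 y1 y2 * P1' y1 u1 * P2 y2 u2 *
        ((1 - s1) * (-Real.log (QX12 u1 u2 y0 x))
          + s1 * (-Real.log (QX1 u1 y0 x)) + s1 * (-Real.log (QX2 u2 y0 x))
          + s1 * Real.log (P1' y1 u1 / QU1 u1) + s2 * Real.log (P2 y2 u2 / QU2 u2)
          + s1 * (-Real.log (QY01 u1 y0)) + s2 * (-Real.log (QY02 u2 y0))))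
      = s1 * (mY1 p y1 * (P1' y1 u1 * (Real.log (P1' y1 u1)
            + (psi1 p P2 s1 QX12 QX1 QY01 u1 y1 - Real.log (QU1 u1)))))
        + P1' y1 u1 * ((∑ x, ∑ y0, ∑ y2, ∑ u2, p x y0 y1 y2 * P2 y2 u2 *
              (s1 * (-Real.log (QX2 u2 y0 x)) + s2 * Real.log (P2 y2 u2 / QU2 u2)
                + s2 * (-Real.log (QY02 u2 y0)))) - Ent1 p P2 s1 y1) := by
    intro y1 u1
    have hfac : (∑ x, ∑ y0, ∑ y2, ∑ u2, p x y0 y1 y2 * P1' y1 u1 * P2 y2 u2 *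
          ((1 - s1) * (-Real.log (QX12 u1 u2 y0 x))
            + s1 * (-Real.log (QX1 u1 y0 x)) + s1 * (-Real.log (QX2 u2 y0 x))
            + s1 * Real.log (P1' y1 u1 / QU1 u1) + s2 * Real.log (P2 y2 u2 / QU2 u2)
            + s1 * (-Real.log (QY01 u1 y0)) + s2 * (-Real.log (QY02 u2 y0))))
        = P1' y1 u1 * ∑ x, ∑ y0, ∑ y2, ∑ u2,
            (p x y0 y1 y2 * P2 y2 u2 *
              ((1 - s1) * (-Real.log (QX12 u1 u2 y0 x)) + s1 * (-Real.log (QX1 u1 y0 x))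
                + s1 * (-Real.log (QY01 u1 y0)))
            + p x y0 y1 y2 * P2 y2 u2 *
              (s1 * (-Real.log (QX2 u2 y0 x)) + s2 * Real.log (P2 y2 u2 / QU2 u2)
                + s2 * (-Real.log (QY02 u2 y0)))
            + p x y0 y1 y2 * P2 y2 u2 * (s1 * Real.log (P1' y1 u1 / QU1 u1))) := by
      simp only [Finset.mul_sum]
      exact Finset.sum_congr rfl fun x _ => Finset.sum_congr rfl fun y0 _ =>
        Finset.sum_congr rfl fun y2 _ => Finset.sum_congr rfl fun u2 _ => by ring
    rw [hfac]
    have hadd : ∑ x, ∑ y0, ∑ y2, ∑ u2,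
        (p x y0 y1 y2 * P2 y2 u2 *
          ((1 - s1) * (-Real.log (QX12 u1 u2 y0 x)) + s1 * (-Real.log (QX1 u1 y0 x))
            + s1 * (-Real.log (QY01 u1 y0)))
        + p x y0 y1 y2 * P2 y2 u2 *
          (s1 * (-Real.log (QX2 u2 y0 x)) + s2 * Real.log (P2 y2 u2 / QU2 u2)
            + s2 * (-Real.log (QY02 u2 y0)))
        + p x y0 y1 y2 * P2 y2 u2 * (s1 * Real.log (P1' y1 u1 / QU1 u1)))
        = (∑ x, ∑ y0, ∑ y2, ∑ u2, p x y0 y1 y2 * P2 y2 u2 *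
            ((1 - s1) * (-Real.log (QX12 u1 u2 y0 x)) + s1 * (-Real.log (QX1 u1 y0 x))
              + s1 * (-Real.log (QY01 u1 y0))))
          + (∑ x, ∑ y0, ∑ y2, ∑ u2, p x y0 y1 y2 * P2 y2 u2 *
              (s1 * (-Real.log (QX2 u2 y0 x)) + s2 * Real.log (P2 y2 u2 / QU2 u2)
                + s2 * (-Real.log (QY02 u2 y0))))
          + (∑ x, ∑ y0, ∑ y2, ∑ u2, p x y0 y1 y2 * P2 y2 u2 *
              (s1 * Real.log (P1' y1 u1 / QU1 u1))) := by
      simp only [Finset.sum_add_distrib]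
    rw [hadd]
    have hmarg : ∑ x, ∑ y0, ∑ y2, ∑ u2, p x y0 y1 y2 * P2 y2 u2 = mY1 p y1 :=
      marg_gen (fun x y0 y2 => p x y0 y1 y2) P2 hP2sum
    have hlast : ∑ x, ∑ y0, ∑ y2, ∑ u2, p x y0 y1 y2 * P2 y2 u2 *
          (s1 * Real.log (P1' y1 u1 / QU1 u1))
        = mY1 p y1 * (s1 * Real.log (P1' y1 u1 / QU1 u1)) := by
      rw [sum4_mul_const (fun x y0 y2 u2 => p x y0 y1 y2 * P2 y2 u2)
        (s1 * Real.log (P1' y1 u1 / QU1 u1)), hmarg, mul_comm]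
    rw [hlast, coeff1 p P2 s1 hs1 hp hP2 hP2sum hX hY0 hY2 QX12 QX1 QY01 hQX12 hQX1 hQY01 u1 y1]
    rcases eq_or_lt_of_le (hP1'0 y1 u1) with h0 | hpos
    · rw [← h0]
      simp
    · rw [Real.log_div hpos.ne' (hQU1 u1).ne']
      ring
  have inner : ∀ y1,
      (∑ u1, ∑ x, ∑ y0, ∑ y2, ∑ u2, p x y0 y1 y2 * P1' y1 u1 * P2 y2 u2 *
        ((1 - s1) * (-Real.log (QX12 u1 u2 y0 x))
          + s1 * (-Real.log (QX1 u1 y0 x)) + s1 * (-Real.log (QX2 u2 y0 x))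
          + s1 * Real.log (P1' y1 u1 / QU1 u1) + s2 * Real.log (P2 y2 u2 / QU2 u2)
          + s1 * (-Real.log (QY01 u1 y0)) + s2 * (-Real.log (QY02 u2 y0))))
      = ((∑ x, ∑ y0, ∑ y2, ∑ u2, p x y0 y1 y2 * P2 y2 u2 *
            (s1 * (-Real.log (QX2 u2 y0 x)) + s2 * Real.log (P2 y2 u2 / QU2 u2)
              + s2 * (-Real.log (QY02 u2 y0)))) - Ent1 p P2 s1 y1)
        + s1 * (mY1 p y1 * ∑ u1, P1' y1 u1 * (Real.log (P1' y1 u1)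
            + (psi1 p P2 s1 QX12 QX1 QY01 u1 y1 - Real.log (QU1 u1)))) := by
    intro y1
    rw [Finset.sum_congr rfl fun u1 _ => step y1 u1, Finset.sum_add_distrib,
      ← Finset.sum_mul, hP1's y1, one_mul, ← Finset.mul_sum, ← Finset.mul_sum]
    ring
  simp only [FsQ, joint]
  rw [reorder61]
  rw [Finset.sum_congr rfl fun y1 _ => inner y1, Finset.sum_add_distrib, ← Finset.mul_sum]
  ring

lemma extract_single {B : Type*} [Fintype B] (m : B → ℝ) (G1 G2 : B → ℝ)
    (hm : ∀ b, 0 < m b) (hle : ∑ b, m b * G1 b ≤ ∑ b, m b * G2 b) (b0 : B)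
    (heq : ∀ b, b ≠ b0 → G2 b = G1 b) : G1 b0 ≤ G2 b0 := by
  have h1 : ∑ b, (m b * G2 b - m b * G1 b) = m b0 * G2 b0 - m b0 * G1 b0 := by
    refine Finset.sum_eq_single b0 (fun b _ hb => by rw [heq b hb]; ring)
      (fun h => absurd (Finset.mem_univ _) h)
  have h2 : (0:ℝ) ≤ m b0 * G2 b0 - m b0 * G1 b0 := by
    rw [← h1, Finset.sum_sub_distrib]
    linarith
  have h3 : m b0 * G1 b0 ≤ m b0 * G2 b0 := by linarith
  exact (mul_le_mul_iff_right₀ (hm b0)).mp h3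

lemma alg2 {s m a b c t u : ℝ} (hs : s ≠ 0) :
    s * m * (t / s * a + u / s * b + c) = t * (m * a) + u * (m * b) + s * (m * c) := by
  field_simp

lemma reorder62 (f : X → Y0 → Y1 → Y2 → U1 → U2 → ℝ) :
    ∑ x, ∑ y0, ∑ y1, ∑ y2, ∑ u1, ∑ u2, f x y0 y1 y2 u1 u2
      = ∑ y2, ∑ u2, ∑ x, ∑ y0, ∑ y1, ∑ u1, f x y0 y1 y2 u1 u2 := by
  calc ∑ x, ∑ y0, ∑ y1, ∑ y2, ∑ u1, ∑ u2, f x y0 y1 y2 u1 u2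
      = ∑ x, ∑ y0, ∑ y1, ∑ y2, ∑ u2, ∑ u1, f x y0 y1 y2 u1 u2 :=
        Finset.sum_congr rfl fun x _ => Finset.sum_congr rfl fun y0 _ =>
          Finset.sum_congr rfl fun y1 _ => Finset.sum_congr rfl fun y2 _ => Finset.sum_comm
    _ = ∑ x, ∑ y0, ∑ y2, ∑ y1, ∑ u2, ∑ u1, f x y0 y1 y2 u1 u2 :=
        Finset.sum_congr rfl fun x _ => Finset.sum_congr rfl fun y0 _ => Finset.sum_comm
    _ = ∑ x, ∑ y2, ∑ y0, ∑ y1, ∑ u2, ∑ u1, f x y0 y1 y2 u1 u2 :=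
        Finset.sum_congr rfl fun x _ => Finset.sum_comm
    _ = ∑ y2, ∑ x, ∑ y0, ∑ y1, ∑ u2, ∑ u1, f x y0 y1 y2 u1 u2 := Finset.sum_comm
    _ = ∑ y2, ∑ x, ∑ y0, ∑ u2, ∑ y1, ∑ u1, f x y0 y1 y2 u1 u2 :=
        Finset.sum_congr rfl fun y2 _ => Finset.sum_congr rfl fun x _ =>
          Finset.sum_congr rfl fun y0 _ => Finset.sum_comm
    _ = ∑ y2, ∑ x, ∑ u2, ∑ y0, ∑ y1, ∑ u1, f x y0 y1 y2 u1 u2 :=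
        Finset.sum_congr rfl fun y2 _ => Finset.sum_congr rfl fun x _ => Finset.sum_comm
    _ = ∑ y2, ∑ u2, ∑ x, ∑ y0, ∑ y1, ∑ u1, f x y0 y1 y2 u1 u2 :=
        Finset.sum_congr rfl fun y2 _ => Finset.sum_comm

/-- The `u2`-independent "entropy" part of the linear coefficient for the second encoder. -/
def Ent2 (s1 s2 : ℝ) (y2 : Y2) : ℝ :=
  (1 - s1) * ∑ u1, ∑ y0, ∑ x, (∑ y1, p x y0 y1 y2 * P1 y1 u1) *
      Real.log (cXgY2U1Y0 p P1 x y2 u1 y0)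
    + s1 * ∑ y0, ∑ x, (∑ y1, p x y0 y1 y2) * Real.log (cXgY2Y0 p x y2 y0)
    + s2 * ∑ y0, (∑ x, ∑ y1, p x y0 y1 y2) * Real.log (cY0gY2 p y0 y2)

lemma klA2 (hp : ∀ x y0 y1 y2, 0 < p x y0 y1 y2) (hP1 : ∀ y1 u1, 0 < P1 y1 u1)
    (hX : Nonempty X) (hY0 : Nonempty Y0) (hY1 : Nonempty Y1)
    (QX12 : U1 → U2 → Y0 → X → ℝ) (hQX12 : ∀ u1 u2 y0 x, 0 < QX12 u1 u2 y0 x)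
    (u2 : U2) (y2 : Y2) :
    mY2 p y2 * (∑ u1, ∑ y0, cU1Y0gY2 p P1 u1 y0 y2 *
        klDiv (fun x => cXgY2U1Y0 p P1 x y2 u1 y0) (fun x => QX12 u1 u2 y0 x))
      = ∑ u1, ∑ y0, ∑ x, (∑ y1, p x y0 y1 y2 * P1 y1 u1) *
          (Real.log (cXgY2U1Y0 p P1 x y2 u1 y0) - Real.log (QX12 u1 u2 y0 x)) := by
  haveI := hX; haveI := hY0; haveI := hY1
  have hm : (0:ℝ) < mY2 p y2 := sum_pos3 fun a b c => hp a b c y2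
  rw [Finset.mul_sum]
  refine Finset.sum_congr rfl fun u1 _ => ?_
  rw [Finset.mul_sum]
  refine Finset.sum_congr rfl fun y0 _ => ?_
  simp only [cU1Y0gY2, cXgY2U1Y0, klDiv, mY2]
  exact kl_gen (fun x y1 => p x y0 y1 y2 * P1 y1 u1) (fun x => QX12 u1 u2 y0 x)
    (fun a => sum_pos1 fun c => mul_pos (hp a y0 c y2) (hP1 c u1))
    (sum_pos2 fun a c => mul_pos (hp a y0 c y2) (hP1 c u1))
    (fun a => hQX12 u1 u2 y0 a) _ hm.ne'

lemma klB2 (hp : ∀ x y0 y1 y2, 0 < p x y0 y1 y2)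
    (hX : Nonempty X) (hY0 : Nonempty Y0) (hY1 : Nonempty Y1)
    (QX2 : U2 → Y0 → X → ℝ) (hQX2 : ∀ u2 y0 x, 0 < QX2 u2 y0 x) (u2 : U2) (y2 : Y2) :
    mY2 p y2 * (∑ y0, cY0gY2 p y0 y2 *
        klDiv (fun x => cXgY2Y0 p x y2 y0) (fun x => QX2 u2 y0 x))
      = ∑ y0, ∑ x, (∑ y1, p x y0 y1 y2) *
          (Real.log (cXgY2Y0 p x y2 y0) - Real.log (QX2 u2 y0 x)) := by
  haveI := hX; haveI := hY0; haveI := hY1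
  have hm : (0:ℝ) < mY2 p y2 := sum_pos3 fun a b c => hp a b c y2
  rw [Finset.mul_sum]
  refine Finset.sum_congr rfl fun y0 _ => ?_
  simp only [cY0gY2, cXgY2Y0, klDiv, mY2]
  exact kl_gen (fun x y1 => p x y0 y1 y2) (fun x => QX2 u2 y0 x)
    (fun a => sum_pos1 fun c => hp a y0 c y2)
    (sum_pos2 fun a c => hp a y0 c y2)
    (fun a => hQX2 u2 y0 a) _ hm.ne'

lemma klC2 (hp : ∀ x y0 y1 y2, 0 < p x y0 y1 y2)
    (hX : Nonempty X) (hY0 : Nonempty Y0) (hY1 : Nonempty Y1)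
    (QY02 : U2 → Y0 → ℝ) (hQY02 : ∀ u2 y0, 0 < QY02 u2 y0) (u2 : U2) (y2 : Y2) :
    mY2 p y2 * klDiv (fun y0 => cY0gY2 p y0 y2) (fun y0 => QY02 u2 y0)
      = ∑ y0, (∑ x, ∑ y1, p x y0 y1 y2) *
          (Real.log (cY0gY2 p y0 y2) - Real.log (QY02 u2 y0)) := by
  haveI := hX; haveI := hY0; haveI := hY1
  have hm : (0:ℝ) < mY2 p y2 := sum_pos3 fun a b c => hp a b c y2
  simp only [cY0gY2, klDiv, mY2]
  exact kl0_gen (fun y0 => ∑ x, ∑ y1, p x y0 y1 y2) (fun y0 => QY02 u2 y0)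
    (fun b => sum_pos2 fun a c => hp a b c y2) (fun b => hQY02 u2 b) _ hm

lemma coeff2 (s1 s2 : ℝ) (hs2 : 0 < s2)
    (hp : ∀ x y0 y1 y2, 0 < p x y0 y1 y2) (hP1 : ∀ y1 u1, 0 < P1 y1 u1)
    (hP1sum : ∀ y1, ∑ u1, P1 y1 u1 = 1)
    (hX : Nonempty X) (hY0 : Nonempty Y0) (hY1 : Nonempty Y1)
    (QX12 : U1 → U2 → Y0 → X → ℝ) (QX2 : U2 → Y0 → X → ℝ) (QY02 : U2 → Y0 → ℝ)
    (hQX12 : ∀ u1 u2 y0 x, 0 < QX12 u1 u2 y0 x) (hQX2 : ∀ u2 y0 x, 0 < QX2 u2 y0 x)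
    (hQY02 : ∀ u2 y0, 0 < QY02 u2 y0) (u2 : U2) (y2 : Y2) :
    ∑ x, ∑ y0, ∑ y1, ∑ u1, p x y0 y1 y2 * P1 y1 u1 *
        ((1 - s1) * (-Real.log (QX12 u1 u2 y0 x)) + s1 * (-Real.log (QX2 u2 y0 x))
          + s2 * (-Real.log (QY02 u2 y0)))
      = s2 * mY2 p y2 * psi2 p P1 s1 s2 QX12 QX2 QY02 u2 y2 - Ent2 p P1 s1 s2 y2 := by
  have e1 := klA2 p P1 hp hP1 hX hY0 hY1 QX12 hQX12 u2 y2
  have e2 := klB2 p hp hX hY0 hY1 QX2 hQX2 u2 y2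
  have e3 := klC2 p hp hX hY0 hY1 QY02 hQY02 u2 y2
  have epsi : s2 * mY2 p y2 * psi2 p P1 s1 s2 QX12 QX2 QY02 u2 y2
      = (1 - s1) * (mY2 p y2 * ∑ u1, ∑ y0, cU1Y0gY2 p P1 u1 y0 y2 *
            klDiv (fun x => cXgY2U1Y0 p P1 x y2 u1 y0) (fun x => QX12 u1 u2 y0 x))
        + s1 * (mY2 p y2 * ∑ y0, cY0gY2 p y0 y2 *
            klDiv (fun x => cXgY2Y0 p x y2 y0) (fun x => QX2 u2 y0 x))
        + s2 * (mY2 p y2 *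
            klDiv (fun y0 => cY0gY2 p y0 y2) (fun y0 => QY02 u2 y0)) := by
    simp only [psi2]
    exact alg2 hs2.ne'
  rw [epsi, e1, e2, e3]
  simp only [Ent2]
  have hA : ∑ x, ∑ y0, ∑ y1, ∑ u1, p x y0 y1 y2 * P1 y1 u1 *
        ((1 - s1) * (-Real.log (QX12 u1 u2 y0 x)))
      = ∑ u1, ∑ y0, ∑ x, (∑ y1, p x y0 y1 y2 * P1 y1 u1) *
          ((1 - s1) * (-Real.log (QX12 u1 u2 y0 x))) :=
    splitA (fun x y0 y1 => p x y0 y1 y2) P1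
      (fun u1 y0 x => (1 - s1) * (-Real.log (QX12 u1 u2 y0 x)))
  have hB : ∑ x, ∑ y0, ∑ y1, ∑ u1, p x y0 y1 y2 * P1 y1 u1 *
        (s1 * (-Real.log (QX2 u2 y0 x)))
      = ∑ y0, ∑ x, (∑ y1, p x y0 y1 y2) * (s1 * (-Real.log (QX2 u2 y0 x))) :=
    splitB (fun x y0 y1 => p x y0 y1 y2) P1 hP1sum
      (fun y0 x => s1 * (-Real.log (QX2 u2 y0 x)))
  have hC : ∑ x, ∑ y0, ∑ y1, ∑ u1, p x y0 y1 y2 * P1 y1 u1 *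
        (s2 * (-Real.log (QY02 u2 y0)))
      = ∑ y0, (∑ x, ∑ y1, p x y0 y1 y2) * (s2 * (-Real.log (QY02 u2 y0))) :=
    splitC (fun x y0 y1 => p x y0 y1 y2) P1 hP1sum
      (fun y0 => s2 * (-Real.log (QY02 u2 y0)))
  have hsplit : ∑ x, ∑ y0, ∑ y1, ∑ u1, p x y0 y1 y2 * P1 y1 u1 *
        ((1 - s1) * (-Real.log (QX12 u1 u2 y0 x)) + s1 * (-Real.log (QX2 u2 y0 x))
          + s2 * (-Real.log (QY02 u2 y0)))
      = (∑ x, ∑ y0, ∑ y1, ∑ u1, p x y0 y1 y2 * P1 y1 u1 *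
            ((1 - s1) * (-Real.log (QX12 u1 u2 y0 x))))
        + (∑ x, ∑ y0, ∑ y1, ∑ u1, p x y0 y1 y2 * P1 y1 u1 *
            (s1 * (-Real.log (QX2 u2 y0 x))))
        + (∑ x, ∑ y0, ∑ y1, ∑ u1, p x y0 y1 y2 * P1 y1 u1 *
            (s2 * (-Real.log (QY02 u2 y0)))) := by
    simp only [← Finset.sum_add_distrib]
    exact Finset.sum_congr rfl fun x _ => Finset.sum_congr rfl fun y0 _ =>
      Finset.sum_congr rfl fun y1 _ => Finset.sum_congr rfl fun u1 _ => by ring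
  rw [hsplit, hA, hB, hC]
  have hc1 : (1 - s1) * (∑ u1, ∑ y0, ∑ x, (∑ y1, p x y0 y1 y2 * P1 y1 u1) *
          (Real.log (cXgY2U1Y0 p P1 x y2 u1 y0) - Real.log (QX12 u1 u2 y0 x)))
        - (1 - s1) * (∑ u1, ∑ y0, ∑ x, (∑ y1, p x y0 y1 y2 * P1 y1 u1) *
          Real.log (cXgY2U1Y0 p P1 x y2 u1 y0))
      = ∑ u1, ∑ y0, ∑ x, (∑ y1, p x y0 y1 y2 * P1 y1 u1) *
          ((1 - s1) * -Real.log (QX12 u1 u2 y0 x)) :=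
    comb3 (1 - s1) (fun u1 y0 x => ∑ y1, p x y0 y1 y2 * P1 y1 u1)
      (fun u1 y0 x => Real.log (cXgY2U1Y0 p P1 x y2 u1 y0))
      (fun u1 y0 x => Real.log (QX12 u1 u2 y0 x))
  have hc2 : s1 * (∑ y0, ∑ x, (∑ y1, p x y0 y1 y2) *
          (Real.log (cXgY2Y0 p x y2 y0) - Real.log (QX2 u2 y0 x)))
        - s1 * (∑ y0, ∑ x, (∑ y1, p x y0 y1 y2) * Real.log (cXgY2Y0 p x y2 y0))
      = ∑ y0, ∑ x, (∑ y1, p x y0 y1 y2) * (s1 * -Real.log (QX2 u2 y0 x)) :=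
    comb2 s1 (fun y0 x => ∑ y1, p x y0 y1 y2)
      (fun y0 x => Real.log (cXgY2Y0 p x y2 y0)) (fun y0 x => Real.log (QX2 u2 y0 x))
  have hc3 : s2 * (∑ y0, (∑ x, ∑ y1, p x y0 y1 y2) *
          (Real.log (cY0gY2 p y0 y2) - Real.log (QY02 u2 y0)))
        - s2 * (∑ y0, (∑ x, ∑ y1, p x y0 y1 y2) * Real.log (cY0gY2 p y0 y2))
      = ∑ y0, (∑ x, ∑ y1, p x y0 y1 y2) * (s2 * -Real.log (QY02 u2 y0)) :=
    comb1 s2 (fun y0 => ∑ x, ∑ y1, p x y0 y1 y2)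
      (fun y0 => Real.log (cY0gY2 p y0 y2)) (fun y0 => Real.log (QY02 u2 y0))
  have hn1 : ∑ u1, ∑ y0, ∑ x, (∑ y1, p x y0 y1 y2 * P1 y1 u1) *
        ((1 - s1) * (-Real.log (QX12 u1 u2 y0 x)))
      = ∑ u1, ∑ y0, ∑ x, (∑ y1, p x y0 y1 y2 * P1 y1 u1) *
        ((1 - s1) * -Real.log (QX12 u1 u2 y0 x)) := rfl
  have hn2 : ∑ y0, ∑ x, (∑ y1, p x y0 y1 y2) * (s1 * (-Real.log (QX2 u2 y0 x)))
      = ∑ y0, ∑ x, (∑ y1, p x y0 y1 y2) * (s1 * -Real.log (QX2 u2 y0 x)) := rfl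
  have hn3 : ∑ y0, (∑ x, ∑ y1, p x y0 y1 y2) * (s2 * (-Real.log (QY02 u2 y0)))
      = ∑ y0, (∑ x, ∑ y1, p x y0 y1 y2) * (s2 * -Real.log (QY02 u2 y0)) := rfl
  rw [hn1, hn2, hn3, ← hc1, ← hc2, ← hc3]
  ring

lemma decomp2 (s1 s2 : ℝ) (hs2 : 0 < s2)
    (hp : ∀ x y0 y1 y2, 0 < p x y0 y1 y2) (hP1 : ∀ y1 u1, 0 < P1 y1 u1)
    (hP1sum : ∀ y1, ∑ u1, P1 y1 u1 = 1)
    (hX : Nonempty X) (hY0 : Nonempty Y0) (hY1 : Nonempty Y1)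
    (QX12 : U1 → U2 → Y0 → X → ℝ) (QX1 : U1 → Y0 → X → ℝ) (QX2 : U2 → Y0 → X → ℝ)
    (QU1 : U1 → ℝ) (QU2 : U2 → ℝ) (QY01 : U1 → Y0 → ℝ) (QY02 : U2 → Y0 → ℝ)
    (hQX12 : ∀ u1 u2 y0 x, 0 < QX12 u1 u2 y0 x) (hQX2 : ∀ u2 y0 x, 0 < QX2 u2 y0 x)
    (hQU2 : ∀ u2, 0 < QU2 u2) (hQY02 : ∀ u2 y0, 0 < QY02 u2 y0)
    (P2' : Y2 → U2 → ℝ) (hP2'0 : ∀ y2 u2, 0 ≤ P2' y2 u2)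
    (hP2's : ∀ y2, ∑ u2, P2' y2 u2 = 1) :
    FsQ p P1 P2' s1 s2 QX12 QX1 QX2 QU1 QU2 QY01 QY02
      = (-s1 * HXgY0 p - (s1 + s2) * HY0 p
          + ∑ y2, ((∑ x, ∑ y0, ∑ y1, ∑ u1, p x y0 y1 y2 * P1 y1 u1 *
                (s1 * (-Real.log (QX1 u1 y0 x)) + s1 * Real.log (P1 y1 u1 / QU1 u1)
                  + s1 * (-Real.log (QY01 u1 y0)))) - Ent2 p P1 s1 s2 y2))
        + s2 * ∑ y2, mY2 p y2 * ∑ u2, P2' y2 u2 *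
            (Real.log (P2' y2 u2)
              + (psi2 p P1 s1 s2 QX12 QX2 QY02 u2 y2 - Real.log (QU2 u2))) := by
  have step : ∀ y2 u2,
      (∑ x, ∑ y0, ∑ y1, ∑ u1, p x y0 y1 y2 * P1 y1 u1 * P2' y2 u2 *
        ((1 - s1) * (-Real.log (QX12 u1 u2 y0 x))
          + s1 * (-Real.log (QX1 u1 y0 x)) + s1 * (-Real.log (QX2 u2 y0 x))
          + s1 * Real.log (P1 y1 u1 / QU1 u1) + s2 * Real.log (P2' y2 u2 / QU2 u2)
          + s1 * (-Real.log (QY01 u1 y0)) + s2 * (-Real.log (QY02 u2 y0))))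
      = s2 * (mY2 p y2 * (P2' y2 u2 * (Real.log (P2' y2 u2)
            + (psi2 p P1 s1 s2 QX12 QX2 QY02 u2 y2 - Real.log (QU2 u2)))))
        + P2' y2 u2 * ((∑ x, ∑ y0, ∑ y1, ∑ u1, p x y0 y1 y2 * P1 y1 u1 *
              (s1 * (-Real.log (QX1 u1 y0 x)) + s1 * Real.log (P1 y1 u1 / QU1 u1)
                + s1 * (-Real.log (QY01 u1 y0)))) - Ent2 p P1 s1 s2 y2) := by
    intro y2 u2
    have hfac : (∑ x, ∑ y0, ∑ y1, ∑ u1, p x y0 y1 y2 * P1 y1 u1 * P2' y2 u2 *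
          ((1 - s1) * (-Real.log (QX12 u1 u2 y0 x))
            + s1 * (-Real.log (QX1 u1 y0 x)) + s1 * (-Real.log (QX2 u2 y0 x))
            + s1 * Real.log (P1 y1 u1 / QU1 u1) + s2 * Real.log (P2' y2 u2 / QU2 u2)
            + s1 * (-Real.log (QY01 u1 y0)) + s2 * (-Real.log (QY02 u2 y0))))
        = P2' y2 u2 * ∑ x, ∑ y0, ∑ y1, ∑ u1,
            (p x y0 y1 y2 * P1 y1 u1 *
              ((1 - s1) * (-Real.log (QX12 u1 u2 y0 x)) + s1 * (-Real.log (QX2 u2 y0 x))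
                + s2 * (-Real.log (QY02 u2 y0)))
            + p x y0 y1 y2 * P1 y1 u1 *
              (s1 * (-Real.log (QX1 u1 y0 x)) + s1 * Real.log (P1 y1 u1 / QU1 u1)
                + s1 * (-Real.log (QY01 u1 y0)))
            + p x y0 y1 y2 * P1 y1 u1 * (s2 * Real.log (P2' y2 u2 / QU2 u2))) := by
      simp only [Finset.mul_sum]
      exact Finset.sum_congr rfl fun x _ => Finset.sum_congr rfl fun y0 _ =>
        Finset.sum_congr rfl fun y1 _ => Finset.sum_congr rfl fun u1 _ => by ring
    rw [hfac]
    have hadd : ∑ x, ∑ y0, ∑ y1, ∑ u1,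
        (p x y0 y1 y2 * P1 y1 u1 *
          ((1 - s1) * (-Real.log (QX12 u1 u2 y0 x)) + s1 * (-Real.log (QX2 u2 y0 x))
            + s2 * (-Real.log (QY02 u2 y0)))
        + p x y0 y1 y2 * P1 y1 u1 *
          (s1 * (-Real.log (QX1 u1 y0 x)) + s1 * Real.log (P1 y1 u1 / QU1 u1)
            + s1 * (-Real.log (QY01 u1 y0)))
        + p x y0 y1 y2 * P1 y1 u1 * (s2 * Real.log (P2' y2 u2 / QU2 u2)))
        = (∑ x, ∑ y0, ∑ y1, ∑ u1, p x y0 y1 y2 * P1 y1 u1 *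
            ((1 - s1) * (-Real.log (QX12 u1 u2 y0 x)) + s1 * (-Real.log (QX2 u2 y0 x))
              + s2 * (-Real.log (QY02 u2 y0))))
          + (∑ x, ∑ y0, ∑ y1, ∑ u1, p x y0 y1 y2 * P1 y1 u1 *
              (s1 * (-Real.log (QX1 u1 y0 x)) + s1 * Real.log (P1 y1 u1 / QU1 u1)
                + s1 * (-Real.log (QY01 u1 y0))))
          + (∑ x, ∑ y0, ∑ y1, ∑ u1, p x y0 y1 y2 * P1 y1 u1 *
              (s2 * Real.log (P2' y2 u2 / QU2 u2))) := by
      simp only [Finset.sum_add_distrib]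
    rw [hadd]
    have hmarg : ∑ x, ∑ y0, ∑ y1, ∑ u1, p x y0 y1 y2 * P1 y1 u1 = mY2 p y2 :=
      marg_gen (fun x y0 y1 => p x y0 y1 y2) P1 hP1sum
    have hlast : ∑ x, ∑ y0, ∑ y1, ∑ u1, p x y0 y1 y2 * P1 y1 u1 *
          (s2 * Real.log (P2' y2 u2 / QU2 u2))
        = mY2 p y2 * (s2 * Real.log (P2' y2 u2 / QU2 u2)) := by
      rw [sum4_mul_const (fun x y0 y1 u1 => p x y0 y1 y2 * P1 y1 u1)
        (s2 * Real.log (P2' y2 u2 / QU2 u2)), hmarg, mul_comm]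
    rw [hlast, coeff2 p P1 s1 s2 hs2 hp hP1 hP1sum hX hY0 hY1 QX12 QX2 QY02
      hQX12 hQX2 hQY02 u2 y2]
    rcases eq_or_lt_of_le (hP2'0 y2 u2) with h0 | hpos
    · rw [← h0]
      simp
    · rw [Real.log_div hpos.ne' (hQU2 u2).ne']
      ring
  have inner : ∀ y2,
      (∑ u2, ∑ x, ∑ y0, ∑ y1, ∑ u1, p x y0 y1 y2 * P1 y1 u1 * P2' y2 u2 *
        ((1 - s1) * (-Real.log (QX12 u1 u2 y0 x))
          + s1 * (-Real.log (QX1 u1 y0 x)) + s1 * (-Real.log (QX2 u2 y0 x))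
          + s1 * Real.log (P1 y1 u1 / QU1 u1) + s2 * Real.log (P2' y2 u2 / QU2 u2)
          + s1 * (-Real.log (QY01 u1 y0)) + s2 * (-Real.log (QY02 u2 y0))))
      = ((∑ x, ∑ y0, ∑ y1, ∑ u1, p x y0 y1 y2 * P1 y1 u1 *
            (s1 * (-Real.log (QX1 u1 y0 x)) + s1 * Real.log (P1 y1 u1 / QU1 u1)
              + s1 * (-Real.log (QY01 u1 y0)))) - Ent2 p P1 s1 s2 y2)
        + s2 * (mY2 p y2 * ∑ u2, P2' y2 u2 * (Real.log (P2' y2 u2)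
            + (psi2 p P1 s1 s2 QX12 QX2 QY02 u2 y2 - Real.log (QU2 u2)))) := by
    intro y2
    rw [Finset.sum_congr rfl fun u2 _ => step y2 u2, Finset.sum_add_distrib,
      ← Finset.sum_mul, hP2's y2, one_mul, ← Finset.mul_sum, ← Finset.mul_sum]
    ring
  simp only [FsQ, joint]
  rw [reorder62]
  rw [Finset.sum_congr rfl fun y2 _ => inner y2, Finset.sum_add_distrib, ← Finset.mul_sum]
  ring
/-- For fixed auxiliary distributions `Q`, any minimizer `P = (P_{U1|Y1}, P_{U2|Y2})` of the
variational CEO objective `F_s(P, Q)` (subject to the normalization constraints) is the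
Gibbs-type distribution
`p(u_k|y_k) = q(u_k) exp(−ψ_k(u_k, y_k)) / Σ_{u_k'} q(u_k') exp(−ψ_k(u_k', y_k))`. -/
theorem stmt14 (s1 s2 : ℝ) (hs1 : 0 < s1) (hs1' : s1 ≤ 1) (hs2 : 0 < s2)
    (hp : ∀ x y0 y1 y2, 0 < p x y0 y1 y2)
    (hpsum : ∑ x, ∑ y0, ∑ y1, ∑ y2, p x y0 y1 y2 = 1)
    (QX12 : U1 → U2 → Y0 → X → ℝ) (QX1 : U1 → Y0 → X → ℝ) (QX2 : U2 → Y0 → X → ℝ)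
    (QU1 : U1 → ℝ) (QU2 : U2 → ℝ) (QY01 : U1 → Y0 → ℝ) (QY02 : U2 → Y0 → ℝ)
    (hQX12 : ∀ u1 u2 y0 x, 0 < QX12 u1 u2 y0 x)
    (hQX1 : ∀ u1 y0 x, 0 < QX1 u1 y0 x) (hQX2 : ∀ u2 y0 x, 0 < QX2 u2 y0 x)
    (hQU1 : ∀ u1, 0 < QU1 u1) (hQU2 : ∀ u2, 0 < QU2 u2)
    (hQY01 : ∀ u1 y0, 0 < QY01 u1 y0) (hQY02 : ∀ u2 y0, 0 < QY02 u2 y0)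
    (hP1 : ∀ y1 u1, 0 < P1 y1 u1) (hP1sum : ∀ y1, ∑ u1, P1 y1 u1 = 1)
    (hP2 : ∀ y2 u2, 0 < P2 y2 u2) (hP2sum : ∀ y2, ∑ u2, P2 y2 u2 = 1)
    (hmin : ∀ (P1' : Y1 → U1 → ℝ) (P2' : Y2 → U2 → ℝ),
      (∀ y1 u1, 0 ≤ P1' y1 u1) → (∀ y1, ∑ u1, P1' y1 u1 = 1) →
      (∀ y2 u2, 0 ≤ P2' y2 u2) → (∀ y2, ∑ u2, P2' y2 u2 = 1) →
      FsQ p P1 P2 s1 s2 QX12 QX1 QX2 QU1 QU2 QY01 QY02 ≤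
        FsQ p P1' P2' s1 s2 QX12 QX1 QX2 QU1 QU2 QY01 QY02) :
    (∀ y1 u1, P1 y1 u1 =
        QU1 u1 * Real.exp (-psi1 p P2 s1 QX12 QX1 QY01 u1 y1) /
          ∑ u1', QU1 u1' * Real.exp (-psi1 p P2 s1 QX12 QX1 QY01 u1' y1)) ∧
      (∀ y2 u2, P2 y2 u2 =
        QU2 u2 * Real.exp (-psi2 p P1 s1 s2 QX12 QX2 QY02 u2 y2) /
          ∑ u2', QU2 u2' * Real.exp (-psi2 p P1 s1 s2 QX12 QX2 QY02 u2' y2)) := by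
  classical
  have hX : Nonempty X := by
    by_contra h
    rw [not_nonempty_iff] at h
    simp [Finset.univ_eq_empty] at hpsum
  have hY0 : Nonempty Y0 := by
    by_contra h
    rw [not_nonempty_iff] at h
    simp [Finset.univ_eq_empty] at hpsum
  have hY1 : Nonempty Y1 := by
    by_contra h
    rw [not_nonempty_iff] at h
    simp [Finset.univ_eq_empty] at hpsum
  have hY2 : Nonempty Y2 := by
    by_contra h
    rw [not_nonempty_iff] at h
    simp [Finset.univ_eq_empty] at hpsum
  haveI := hX; haveI := hY0; haveI := hY1; haveI := hY2
  constructor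
  · -- first encoder
    intro y1s u1
    have hm1pos : ∀ y1, 0 < mY1 p y1 := fun y1 => sum_pos3 fun a b c => hp a b y1 c
    have hmin' : ∀ P' : U1 → ℝ, (∀ u, 0 ≤ P' u) → ∑ u, P' u = 1 →
        ∑ u, P1 y1s u * (Real.log (P1 y1s u)
          + (psi1 p P2 s1 QX12 QX1 QY01 u y1s - Real.log (QU1 u)))
        ≤ ∑ u, P' u * (Real.log (P' u)
          + (psi1 p P2 s1 QX12 QX1 QY01 u y1s - Real.log (QU1 u))) := by
      intro P' hP'0 hP's
      set P1'' : Y1 → U1 → ℝ := fun y1 u => if y1 = y1s then P' u else P1 y1 u with hP1''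
      have h0 : ∀ y1 u, 0 ≤ P1'' y1 u := by
        intro y1 u
        by_cases h : y1 = y1s
        · simp [hP1'', h]
          exact hP'0 u
        · simp [hP1'', h]
          exact (hP1 y1 u).le
      have hsum'' : ∀ y1, ∑ u, P1'' y1 u = 1 := by
        intro y1
        by_cases h : y1 = y1s
        · simp [hP1'', h, hP's]
        · simp [hP1'', h, hP1sum y1]
      have hFle := hmin P1'' P2 h0 hsum'' (fun y2 u2 => (hP2 y2 u2).le) hP2sum
      rw [decomp1 p P2 s1 s2 hs1 hp hP2 hP2sum hX hY0 hY2 QX12 QX1 QX2 QU1 QU2 QY01 QY02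
          hQX12 hQX1 hQU1 hQY01 P1 (fun a b => (hP1 a b).le) hP1sum,
        decomp1 p P2 s1 s2 hs1 hp hP2 hP2sum hX hY0 hY2 QX12 QX1 QX2 QU1 QU2 QY01 QY02
          hQX12 hQX1 hQU1 hQY01 P1'' h0 hsum''] at hFle
      have hAB := le_of_mul_le_mul_left ((add_le_add_iff_left _).mp hFle) hs1
      have hkey := extract_single (mY1 p)
        (fun y1 => ∑ u, P1 y1 u * (Real.log (P1 y1 u)
          + (psi1 p P2 s1 QX12 QX1 QY01 u y1 - Real.log (QU1 u))))
        (fun y1 => ∑ u, P1'' y1 u * (Real.log (P1'' y1 u)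
          + (psi1 p P2 s1 QX12 QX1 QY01 u y1 - Real.log (QU1 u))))
        hm1pos hAB y1s
        (fun y1 hb => by simp [hP1'', hb])
      simpa [hP1''] using hkey
    exact gibbs_opt (fun u => psi1 p P2 s1 QX12 QX1 QY01 u y1s) QU1 hQU1 (P1 y1s)
      (hP1 y1s) (hP1sum y1s) hmin' u1
  · -- second encoder
    intro y2s u2
    have hm2pos : ∀ y2, 0 < mY2 p y2 := fun y2 => sum_pos3 fun a b c => hp a b c y2
    have hmin' : ∀ P' : U2 → ℝ, (∀ u, 0 ≤ P' u) → ∑ u, P' u = 1 →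
        ∑ u, P2 y2s u * (Real.log (P2 y2s u)
          + (psi2 p P1 s1 s2 QX12 QX2 QY02 u y2s - Real.log (QU2 u)))
        ≤ ∑ u, P' u * (Real.log (P' u)
          + (psi2 p P1 s1 s2 QX12 QX2 QY02 u y2s - Real.log (QU2 u))) := by
      intro P' hP'0 hP's
      set P2'' : Y2 → U2 → ℝ := fun y2 u => if y2 = y2s then P' u else P2 y2 u with hP2''
      have h0 : ∀ y2 u, 0 ≤ P2'' y2 u := by
        intro y2 u
        by_cases h : y2 = y2s
        · simp [hP2'', h]
          exact hP'0 u
        · simp [hP2'', h]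
          exact (hP2 y2 u).le
      have hsum'' : ∀ y2, ∑ u, P2'' y2 u = 1 := by
        intro y2
        by_cases h : y2 = y2s
        · simp [hP2'', h, hP's]
        · simp [hP2'', h, hP2sum y2]
      have hFle := hmin P1 P2'' (fun a b => (hP1 a b).le) hP1sum h0 hsum''
      rw [decomp2 p P1 s1 s2 hs2 hp hP1 hP1sum hX hY0 hY1 QX12 QX1 QX2 QU1 QU2 QY01 QY02
          hQX12 hQX2 hQU2 hQY02 P2 (fun a b => (hP2 a b).le) hP2sum,
        decomp2 p P1 s1 s2 hs2 hp hP1 hP1sum hX hY0 hY1 QX12 QX1 QX2 QU1 QU2 QY01 QY02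
          hQX12 hQX2 hQU2 hQY02 P2'' h0 hsum''] at hFle
      have hAB := le_of_mul_le_mul_left ((add_le_add_iff_left _).mp hFle) hs2
      have hkey := extract_single (mY2 p)
        (fun y2 => ∑ u, P2 y2 u * (Real.log (P2 y2 u)
          + (psi2 p P1 s1 s2 QX12 QX2 QY02 u y2 - Real.log (QU2 u))))
        (fun y2 => ∑ u, P2'' y2 u * (Real.log (P2'' y2 u)
          + (psi2 p P1 s1 s2 QX12 QX2 QY02 u y2 - Real.log (QU2 u))))
        hm2pos hAB y2s
        (fun y2 hb => by simp [hP2'', hb])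
      simpa [hP2''] using hkey
    exact gibbs_opt (fun u => psi2 p P1 s1 s2 QX12 QX2 QY02 u y2s) QU2 hQU2 (P2 y2s)
      (hP2 y2s) (hP2sum y2s) hmin' u2

end CEO
end
end
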